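/- arXiv:0812.1080 — 8 statements merged into one kernel-verified Lean document; each statement's English description precedes it below -/
import Mathlib

section
/- The Hilbert distance on the interior of a compact convex body is bounded below by a positive multiple of the Euclidean distance: for all x, y in int K, d(x,y) ≥ (log 2 / D) · ‖x − y‖₂, where D is the Euclidean diameter of K. -/
open RealInnerProductSpace

lemma aux_log (s : ℝ) (h0 : 0 ≤ s) (h1 : s ≤ 1) :
    s * Real.log 2 ≤ Real.log (1 + s) := by
  rw [Real.le_log_iff_exp_le (by linarith : (0:ℝ) < 1 + s)]
  have hc := convexOn_exp.2 (Set.mem_univ (0:ℝ)) (Set.mem_univ (Real.log 2))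
    (by linarith : (0:ℝ) ≤ 1 - s) h0 (by ring)
  simp only [smul_eq_mul, mul_zero, zero_add, Real.exp_zero,
    Real.exp_log two_pos] at hc
  linarith

lemma aux_main (r A B D : ℝ) (hA : 0 < A) (hB : 0 < B) (hr : 0 < r)
    (hAD : A ≤ D) (hBD : B ≤ D) (hrD : r ≤ D) :
    (Real.log 2 / D) * r ≤ (1/2) * Real.log (((A + r)/A) * ((B + r)/B)) := by
  have hD : 0 < D := lt_of_lt_of_le hr hrD
  have h1 : 1 + r / D ≤ (A + r) / A := by
    rw [le_div_iff₀ hA]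
    have : r / D * A ≤ r := by
      rw [div_mul_eq_mul_div, div_le_iff₀ hD]; nlinarith
    nlinarith
  have h2 : 1 + r / D ≤ (B + r) / B := by
    rw [le_div_iff₀ hB]
    have : r / D * B ≤ r := by
      rw [div_mul_eq_mul_div, div_le_iff₀ hD]; nlinarith
    nlinarith
  have hpos : (0:ℝ) < 1 + r / D := by positivity
  have hsq : (1 + r/D)^2 ≤ ((A + r)/A) * ((B + r)/B) := by
    have := mul_le_mul h1 h2 (le_of_lt hpos) (by positivity)
    nlinarith
  have hlog1 : Real.log ((1 + r/D)^2) ≤ Real.log (((A + r)/A) * ((B + r)/B)) :=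
    Real.log_le_log (by positivity) hsq
  have hlog2 : Real.log ((1 + r/D)^2) = 2 * Real.log (1 + r/D) := by
    rw [sq, Real.log_mul (ne_of_gt hpos) (ne_of_gt hpos)]; ring
  have key : (r / D) * Real.log 2 ≤ Real.log (1 + r / D) :=
    aux_log _ (by positivity) (by rw [div_le_one hD]; exact hrD)
  have heq : Real.log 2 / D * r = (r / D) * Real.log 2 := by ring
  rw [heq]
  linarith

/-- The Hilbert distance is bounded below by `(log 2 / D)` times the Euclidean distance,
where `D` is the Euclidean diameter of the body. -/
theorem hilbert_dist_ge_euclidean {n : ℕ} (K : Set (EuclideanSpace ℝ (Fin n)))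
    (hKcomp : IsCompact K) (hKconv : Convex ℝ K) (hKint : (interior K).Nonempty)
    (d : EuclideanSpace ℝ (Fin n) → EuclideanSpace ℝ (Fin n) → ℝ)
    (hd0 : ∀ x, d x x = 0)
    (hd : ∀ x y, x ∈ interior K → y ∈ interior K → x ≠ y →
      ∀ a1 a2 : EuclideanSpace ℝ (Fin n), a1 ∈ frontier K → a2 ∈ frontier K →
      (∃ t1 t2 : ℝ, t1 < 0 ∧ 1 < t2 ∧ a1 = x + t1 • (y - x) ∧ a2 = x + t2 • (y - x)) →
      d x y = (1/2) * Real.log ((‖y - a1‖ / ‖x - a1‖) * (‖x - a2‖ / ‖y - a2‖))) :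
    ∀ x ∈ interior K, ∀ y ∈ interior K,
      d x y ≥ (Real.log 2 / Metric.diam K) * ‖x - y‖ := by
  intro x hx y hy
  rcases eq_or_ne x y with rfl | hxy
  · simp [hd0 x]
  set v : EuclideanSpace ℝ (Fin n) := y - x with hv_def
  have hv : v ≠ 0 := sub_ne_zero.2 (Ne.symm hxy)
  have hvn : 0 < ‖v‖ := norm_pos_iff.2 hv
  set S : Set ℝ := {t : ℝ | x + t • v ∈ K} with hS_def
  have hSclosed : IsClosed S := by
    have hcont : Continuous fun t : ℝ => x + t • v :=
      continuous_const.add (continuous_id.smul continuous_const)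
    exact hKcomp.isClosed.preimage hcont
  obtain ⟨C, hC⟩ := hKcomp.isBounded.exists_norm_le
  have hSsub : S ⊆ Set.Icc (-((C + ‖x‖)/‖v‖)) ((C + ‖x‖)/‖v‖) := by
    intro t ht
    have h1 : ‖x + t • v‖ ≤ C := hC _ ht
    have he : t • v = (x + t • v) - x := by abel
    have h2 : |t| * ‖v‖ ≤ C + ‖x‖ := by
      have h3 : ‖t • v‖ ≤ C + ‖x‖ := by
        rw [he]
        calc ‖(x + t • v) - x‖ ≤ ‖x + t • v‖ + ‖x‖ := norm_sub_le _ _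
          _ ≤ C + ‖x‖ := by linarith
      rwa [norm_smul, Real.norm_eq_abs] at h3
    have h4 : |t| ≤ (C + ‖x‖)/‖v‖ := (le_div_iff₀ hvn).2 h2
    exact abs_le.1 h4
  have hSbddBelow : BddBelow S := (bddBelow_Icc).mono hSsub
  have hSbddAbove : BddAbove S := (bddAbove_Icc).mono hSsub
  have h0S : (0:ℝ) ∈ S := by
    simp only [hS_def, Set.mem_setOf_eq, zero_smul, add_zero]
    exact interior_subset hx
  have h1S : (1:ℝ) ∈ S := by
    simp only [hS_def, Set.mem_setOf_eq, one_smul, hv_def]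
    have : x + (y - x) = y := by abel
    rw [this]; exact interior_subset hy
  have hSne : S.Nonempty := ⟨0, h0S⟩
  -- negative element of S via interior
  obtain ⟨ε, hε, hball⟩ := Metric.isOpen_iff.1 isOpen_interior x hx
  have hnegmem : ∀ t : ℝ, |t| < ε / ‖v‖ → x + t • v ∈ interior K := by
    intro t ht
    apply hball
    rw [Metric.mem_ball, dist_eq_norm]
    have : x + t • v - x = t • v := by abel
    rw [this, norm_smul, Real.norm_eq_abs]
    calc |t| * ‖v‖ < (ε / ‖v‖) * ‖v‖ := by
          exact mul_lt_mul_of_pos_right ht hvn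
      _ = ε := div_mul_cancel₀ ε (ne_of_gt hvn)
  obtain ⟨ε', hε', hball'⟩ := Metric.isOpen_iff.1 isOpen_interior y hy
  have hposmem : ∀ t : ℝ, |t - 1| < ε' / ‖v‖ → x + t • v ∈ interior K := by
    intro t ht
    apply hball'
    rw [Metric.mem_ball, dist_eq_norm]
    have : x + t • v - y = (t - 1) • v := by
      rw [hv_def, sub_smul, one_smul]; abel
    rw [this, norm_smul, Real.norm_eq_abs]
    calc |t - 1| * ‖v‖ < (ε' / ‖v‖) * ‖v‖ := mul_lt_mul_of_pos_right ht hvn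
      _ = ε' := div_mul_cancel₀ ε' (ne_of_gt hvn)
  set t1 : ℝ := sInf S with ht1_def
  set t2 : ℝ := sSup S with ht2_def
  have ht1S : t1 ∈ S := hSclosed.csInf_mem hSne hSbddBelow
  have ht2S : t2 ∈ S := hSclosed.csSup_mem hSne hSbddAbove
  have hδ : 0 < ε / ‖v‖ / 2 := by positivity
  have ht1neg : t1 < 0 := by
    have hmem : x + (-(ε / ‖v‖ / 2)) • v ∈ interior K := by
      apply hnegmem
      rw [abs_neg, abs_of_pos hδ]
      linarith
    have : -(ε / ‖v‖ / 2) ∈ S := interior_subset (s := K) hmem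
    have := csInf_le hSbddBelow this
    linarith
  have hδ' : 0 < ε' / ‖v‖ / 2 := by positivity
  have ht2gt : 1 < t2 := by
    have hmem : x + (1 + ε' / ‖v‖ / 2) • v ∈ interior K := by
      apply hposmem
      have : (1 + ε' / ‖v‖ / 2) - 1 = ε' / ‖v‖ / 2 := by ring
      rw [this, abs_of_pos hδ']
      linarith
    have hmemS : (1 + ε' / ‖v‖ / 2) ∈ S := interior_subset (s := K) hmem
    have := le_csSup hSbddAbove hmemS
    linarith
  set a1 : EuclideanSpace ℝ (Fin n) := x + t1 • v with ha1_def
  set a2 : EuclideanSpace ℝ (Fin n) := x + t2 • v with ha2_def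
  have ha1K : a1 ∈ K := ht1S
  have ha2K : a2 ∈ K := ht2S
  have ha1f : a1 ∈ frontier K := by
    rw [frontier, hKcomp.isClosed.closure_eq]
    refine ⟨ha1K, fun hint => ?_⟩
    obtain ⟨r, hr, hball1⟩ := Metric.isOpen_iff.1 isOpen_interior a1 hint
    have hδ1 : 0 < r / ‖v‖ / 2 := by positivity
    have : x + (t1 - r / ‖v‖ / 2) • v ∈ interior K := by
      apply hball1
      rw [Metric.mem_ball, dist_eq_norm]
      have he : x + (t1 - r / ‖v‖ / 2) • v - a1 = (-(r / ‖v‖ / 2)) • v := by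
        rw [ha1_def]
        rw [sub_smul]
        have : -(r / ‖v‖ / 2) • v = -((r / ‖v‖ / 2) • v) := by
          rw [neg_smul]
        rw [this]
        abel
      rw [he, norm_smul, Real.norm_eq_abs, abs_neg, abs_of_pos hδ1]
      calc r / ‖v‖ / 2 * ‖v‖ = r / 2 := by field_simp
        _ < r := by linarith
    have hmemS : (t1 - r / ‖v‖ / 2) ∈ S := interior_subset (s := K) this
    have := csInf_le hSbddBelow hmemS
    linarith
  have ha2f : a2 ∈ frontier K := by
    rw [frontier, hKcomp.isClosed.closure_eq]
    refine ⟨ha2K, fun hint => ?_⟩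
    obtain ⟨r, hr, hball2⟩ := Metric.isOpen_iff.1 isOpen_interior a2 hint
    have hδ2 : 0 < r / ‖v‖ / 2 := by positivity
    have : x + (t2 + r / ‖v‖ / 2) • v ∈ interior K := by
      apply hball2
      rw [Metric.mem_ball, dist_eq_norm]
      have he : x + (t2 + r / ‖v‖ / 2) • v - a2 = (r / ‖v‖ / 2) • v := by
        rw [ha2_def, add_smul]; abel
      rw [he, norm_smul, Real.norm_eq_abs, abs_of_pos hδ2]
      calc r / ‖v‖ / 2 * ‖v‖ = r / 2 := by field_simp
        _ < r := by linarith
    have hmemS : (t2 + r / ‖v‖ / 2) ∈ S := interior_subset (s := K) this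
    have := le_csSup hSbddAbove hmemS
    linarith
  -- apply the formula
  have hform := hd x y hx hy hxy a1 a2 ha1f ha2f
    ⟨t1, t2, ht1neg, ht2gt, by rw [ha1_def, hv_def], by rw [ha2_def, hv_def]⟩
  -- compute the norms
  have hya1 : ‖y - a1‖ = (1 - t1) * ‖v‖ := by
    have he : y - a1 = (1 - t1) • v := by
      rw [ha1_def, hv_def, sub_smul, one_smul]; abel
    rw [he, norm_smul, Real.norm_eq_abs, abs_of_pos (by linarith)]
  have hxa1 : ‖x - a1‖ = (-t1) * ‖v‖ := by
    have he : x - a1 = (-t1) • v := by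
      rw [ha1_def, neg_smul]; abel
    rw [he, norm_smul, Real.norm_eq_abs, abs_of_pos (by linarith)]
  have hxa2 : ‖x - a2‖ = t2 * ‖v‖ := by
    have he : x - a2 = (-t2) • v := by
      rw [ha2_def, neg_smul]; abel
    rw [he, norm_smul, Real.norm_eq_abs, abs_of_neg (by linarith), neg_neg]
  have hya2 : ‖y - a2‖ = (t2 - 1) * ‖v‖ := by
    have he : y - a2 = (1 - t2) • v := by
      rw [ha2_def, hv_def, sub_smul, one_smul]; abel
    rw [he, norm_smul, Real.norm_eq_abs, abs_of_neg (by linarith)]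
    ring
  have hApos : 0 < ‖x - a1‖ := by
    rw [hxa1]; exact mul_pos (by linarith) hvn
  have hBpos : 0 < ‖y - a2‖ := by
    rw [hya2]; exact mul_pos (by linarith) hvn
  have hxyv : ‖x - y‖ = ‖v‖ := by rw [hv_def, norm_sub_rev]
  have hAr : ‖y - a1‖ = ‖x - a1‖ + ‖x - y‖ := by
    rw [hya1, hxa1, hxyv]; ring
  have hBr : ‖x - a2‖ = ‖y - a2‖ + ‖x - y‖ := by
    rw [hxa2, hya2, hxyv]; ring
  have hform' : d x y = (1/2) * Real.log
      (((‖x - a1‖ + ‖x - y‖)/‖x - a1‖) * ((‖y - a2‖ + ‖x - y‖)/‖y - a2‖)) := by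
    rw [hform, hAr, hBr]
  have hAD : ‖x - a1‖ ≤ Metric.diam K := by
    rw [← dist_eq_norm]
    exact Metric.dist_le_diam_of_mem hKcomp.isBounded (interior_subset hx) ha1K
  have hBD : ‖y - a2‖ ≤ Metric.diam K := by
    rw [← dist_eq_norm]
    exact Metric.dist_le_diam_of_mem hKcomp.isBounded (interior_subset hy) ha2K
  have hrD : ‖x - y‖ ≤ Metric.diam K := by
    rw [← dist_eq_norm]
    exact Metric.dist_le_diam_of_mem hKcomp.isBounded (interior_subset hx)
      (interior_subset hy)
  have hrpos : 0 < ‖x - y‖ := by rw [hxyv]; exact hvn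
  rw [hform']
  exact aux_main (‖x - y‖) (‖x - a1‖) (‖y - a2‖) (Metric.diam K)
    hApos hBpos hrpos hAD hBD hrD
end

section
/- For a compact convex polytope P = {x : f_i(x) ≥ 0, i = 1,…,m} with nonempty interior and Hilbert metric d, for all x, y ∈ int P one has d(x,y) ≥ (1/2) max_{1 ≤ i ≤ m} |log(f_i(x)/f_i(y))|. -/
open RealInnerProductSpace

set_option maxHeartbeats 1600000 in
/-- For a compact convex polytope `P = {x : fᵢ(x) ≥ 0}` with Hilbert metric `d`,
`d(x,y) ≥ (1/2) maxᵢ |log(fᵢ(x)/fᵢ(y))|` for all interior points `x, y`. -/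
theorem hilbert_dist_ge_log_ratio {n m : ℕ}
    (f : Fin m → (EuclideanSpace ℝ (Fin n) →ᵃ[ℝ] ℝ))
    (P : Set (EuclideanSpace ℝ (Fin n)))
    (hP : P = {x | ∀ i, 0 ≤ f i x})
    (hPcomp : IsCompact P) (hPint : (interior P).Nonempty)
    (d : EuclideanSpace ℝ (Fin n) → EuclideanSpace ℝ (Fin n) → ℝ)
    (hd0 : ∀ x, d x x = 0)
    (hd : ∀ x y, x ∈ interior P → y ∈ interior P → x ≠ y →
      ∀ a1 a2 : EuclideanSpace ℝ (Fin n), a1 ∈ frontier P → a2 ∈ frontier P →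
      (∃ t1 t2 : ℝ, t1 < 0 ∧ 1 < t2 ∧ a1 = x + t1 • (y - x) ∧ a2 = x + t2 • (y - x)) →
      d x y = (1/2) * Real.log ((‖y - a1‖ / ‖x - a1‖) * (‖x - a2‖ / ‖y - a2‖))) :
    ∀ x ∈ interior P, ∀ y ∈ interior P, ∀ i : Fin m,
      d x y ≥ (1/2) * |Real.log (f i x / f i y)| := by
  intro x hx y hy i
  have hPclosed : IsClosed P := hPcomp.isClosed
  by_cases hxy : x = y
  · subst hxy
    rw [hd0, ge_iff_le]
    rcases eq_or_ne (f i x) 0 with h | h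
    · simp [h]
    · rw [div_self h]; simp
  -- Setup: the line through x and y
  set v : EuclideanSpace ℝ (Fin n) := y - x with hv_def
  have hv : v ≠ 0 := sub_ne_zero.mpr (Ne.symm hxy)
  have hvn : (0:ℝ) < ‖v‖ := norm_pos_iff.mpr hv
  have hdistline : ∀ s t : ℝ, dist (x + s • v) (x + t • v) = |s - t| * ‖v‖ := by
    intro s t
    rw [dist_eq_norm]
    have h1 : (x + s • v) - (x + t • v) = (s - t) • v := by
      rw [sub_smul]; abel
    rw [h1, norm_smul, Real.norm_eq_abs]
  set S : Set ℝ := {t | x + t • v ∈ P} with hS_def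
  have hScl : IsClosed S := by
    have : Continuous fun t : ℝ => x + t • v :=
      continuous_const.add (continuous_id.smul continuous_const)
    exact hPclosed.preimage this
  -- S is bounded
  obtain ⟨R, hR⟩ := hPcomp.isBounded.subset_ball x
  have hSsub : S ⊆ Set.Icc (-(R/‖v‖)) (R/‖v‖) := by
    intro t ht
    have h2 : dist (x + t • v) (x + (0:ℝ) • v) < R := by
      have h1 : x + t • v ∈ Metric.ball x R := hR ht
      simpa using h1
    rw [hdistline] at h2
    simp only [sub_zero] at h2
    have h4 : |t| ≤ R / ‖v‖ := by
      rw [le_div_iff₀ hvn]; exact h2.le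
    exact abs_le.mp h4
  have hSbddB : BddBelow S := ⟨-(R/‖v‖), fun t ht => (hSsub ht).1⟩
  have hSbddA : BddAbove S := ⟨R/‖v‖, fun t ht => (hSsub ht).2⟩
  -- membership facts
  have hxP : x ∈ P := interior_subset hx
  have hyP : y ∈ P := interior_subset hy
  have hxv : ∀ t : ℝ, x + t • v = x + t • (y - x) := by intro t; rw [hv_def]
  have hy_eq : x + (1:ℝ) • v = y := by rw [hv_def, one_smul]; abel
  have h0S : (0:ℝ) ∈ S := by
    show x + (0:ℝ) • v ∈ P
    simpa using hxP
  -- a small negative element of S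
  obtain ⟨ε, hε, hball⟩ := Metric.mem_nhds_iff.mp (mem_interior_iff_mem_nhds.mp hx)
  have hnegS : -(ε/(2*‖v‖)) ∈ S := by
    show x + (-(ε/(2*‖v‖))) • v ∈ P
    apply hball
    rw [Metric.mem_ball]
    have := hdistline (-(ε/(2*‖v‖))) 0
    simp only [zero_smul, add_zero, sub_zero] at this
    rw [this, abs_neg, abs_of_pos (by positivity)]
    rw [div_mul_eq_mul_div, mul_comm (2:ℝ) ‖v‖, ← div_div, mul_div_assoc,
      div_self hvn.ne', mul_one]
    linarith
  -- an element of S bigger than 1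
  obtain ⟨δ, hδ, hbally⟩ := Metric.mem_nhds_iff.mp (mem_interior_iff_mem_nhds.mp hy)
  have hposS : 1 + δ/(2*‖v‖) ∈ S := by
    show x + (1 + δ/(2*‖v‖)) • v ∈ P
    apply hbally
    rw [Metric.mem_ball, ← hy_eq]
    have := hdistline (1 + δ/(2*‖v‖)) 1
    rw [this, add_sub_cancel_left, abs_of_pos (by positivity)]
    rw [div_mul_eq_mul_div, mul_comm (2:ℝ) ‖v‖, ← div_div, mul_div_assoc,
      div_self hvn.ne', mul_one]
    linarith
  -- define the endpoints
  set t1 : ℝ := sInf S with ht1_def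
  set t2 : ℝ := sSup S with ht2_def
  have hSne : S.Nonempty := ⟨0, h0S⟩
  have ht1S : t1 ∈ S := hScl.csInf_mem hSne hSbddB
  have ht2S : t2 ∈ S := hScl.csSup_mem hSne hSbddA
  have ht1neg : t1 < 0 := by
    have h1 := csInf_le hSbddB hnegS
    have h2 : (0:ℝ) < ε/(2*‖v‖) := by positivity
    linarith
  have ht2gt : 1 < t2 := by
    have h1 := le_csSup hSbddA hposS
    have h2 : (0:ℝ) < δ/(2*‖v‖) := by positivity
    linarith
  -- frontier membership
  have ha1f : x + t1 • v ∈ frontier P := by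
    rw [hPclosed.frontier_eq]
    refine ⟨ht1S, fun hint => ?_⟩
    obtain ⟨r, hr, hballr⟩ := Metric.mem_nhds_iff.mp (mem_interior_iff_mem_nhds.mp hint)
    have hmem : t1 - r/(2*‖v‖) ∈ S := by
      show x + (t1 - r/(2*‖v‖)) • v ∈ P
      apply hballr
      rw [Metric.mem_ball, hdistline]
      rw [sub_sub_cancel_left, abs_neg, abs_of_pos (by positivity)]
      rw [div_mul_eq_mul_div, mul_comm (2:ℝ) ‖v‖, ← div_div, mul_div_assoc,
        div_self hvn.ne', mul_one]
      linarith
    have h1 := csInf_le hSbddB hmem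
    have h2 : (0:ℝ) < r/(2*‖v‖) := by positivity
    rw [← ht1_def] at h1
    linarith
  have ha2f : x + t2 • v ∈ frontier P := by
    rw [hPclosed.frontier_eq]
    refine ⟨ht2S, fun hint => ?_⟩
    obtain ⟨r, hr, hballr⟩ := Metric.mem_nhds_iff.mp (mem_interior_iff_mem_nhds.mp hint)
    have hmem : t2 + r/(2*‖v‖) ∈ S := by
      show x + (t2 + r/(2*‖v‖)) • v ∈ P
      apply hballr
      rw [Metric.mem_ball, hdistline, add_sub_cancel_left, abs_of_pos (by positivity)]
      rw [div_mul_eq_mul_div, mul_comm (2:ℝ) ‖v‖, ← div_div, mul_div_assoc,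
        div_self hvn.ne', mul_one]
      linarith
    have h1 := le_csSup hSbddA hmem
    have h2 : (0:ℝ) < r/(2*‖v‖) := by positivity
    rw [← ht2_def] at h1
    linarith
  -- the Hilbert distance formula
  have hdxy := hd x y hx hy hxy (x + t1 • v) (x + t2 • v) ha1f ha2f
    ⟨t1, t2, ht1neg, ht2gt, by rw [hxv], by rw [hxv]⟩
  -- compute the norms
  have hn1 : ‖y - (x + t1 • v)‖ = (1 - t1) * ‖v‖ := by
    have h1 : y - (x + t1 • v) = (1 - t1) • v := by
      rw [sub_smul, one_smul, hv_def]; abel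
    rw [h1, norm_smul, Real.norm_eq_abs, abs_of_pos (by linarith)]
  have hn2 : ‖x - (x + t1 • v)‖ = (-t1) * ‖v‖ := by
    have h1 : x - (x + t1 • v) = (-t1) • v := by rw [neg_smul]; abel
    rw [h1, norm_smul, Real.norm_eq_abs, abs_of_pos (by linarith)]
  have hn3 : ‖x - (x + t2 • v)‖ = t2 * ‖v‖ := by
    have h1 : x - (x + t2 • v) = (-t2) • v := by rw [neg_smul]; abel
    rw [h1, norm_smul, Real.norm_eq_abs, abs_of_neg (by linarith), neg_neg]
  have hn4 : ‖y - (x + t2 • v)‖ = (t2 - 1) * ‖v‖ := by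
    have h1 : y - (x + t2 • v) = (1 - t2) • v := by
      rw [sub_smul, one_smul, hv_def]; abel
    rw [h1, norm_smul, Real.norm_eq_abs, abs_of_neg (by linarith), neg_sub]
  set r1 : ℝ := (1 - t1) / (-t1) with hr1_def
  set r2 : ℝ := t2 / (t2 - 1) with hr2_def
  have hr1pos : 0 < r1 := by
    apply div_pos <;> linarith
  have hr2pos : 0 < r2 := by
    apply div_pos <;> linarith
  have hr1ge : 1 ≤ r1 := by
    rw [hr1_def, le_div_iff₀ (by linarith)]; linarith
  have hr2ge : 1 ≤ r2 := by
    rw [hr2_def, le_div_iff₀ (by linarith)]; linarith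
  have hCR : (‖y - (x + t1 • v)‖ / ‖x - (x + t1 • v)‖) *
      (‖x - (x + t2 • v)‖ / ‖y - (x + t2 • v)‖) = r1 * r2 := by
    rw [hn1, hn2, hn3, hn4, hr1_def, hr2_def]
    rw [mul_div_mul_right _ _ hvn.ne', mul_div_mul_right _ _ hvn.ne']
  rw [hCR] at hdxy
  rw [hdxy, ge_iff_le]
  have hCRpos : 0 < r1 * r2 := mul_pos hr1pos hr2pos
  have hCRge : 1 ≤ r1 * r2 := one_le_mul_of_one_le_of_one_le hr1ge hr2ge
  -- affine values along the line
  set a : ℝ := f i x with ha_def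
  set b : ℝ := f i y with hb_def
  set c : ℝ := (f i).linear v with hc_def
  have hline : ∀ t : ℝ, f i (x + t • v) = a + t * c := by
    intro t
    have h1 : x + t • v = (t • v) +ᵥ x := by
      simp [vadd_eq_add, add_comm]
    rw [h1, AffineMap.map_vadd, vadd_eq_add]
    rw [map_smul, smul_eq_mul, add_comm]
  have hbac : b = a + c := by
    rw [hb_def, ← hy_eq, hline, one_mul]
  have hmemP : ∀ z ∈ P, 0 ≤ f i z := by
    intro z hz
    rw [hP] at hz
    exact hz i
  have ha0 : 0 ≤ a := hmemP x hxP
  have hb0 : 0 ≤ b := hmemP y hyP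
  have hg1 : 0 ≤ a + t1 * c := by
    have := hmemP _ ht1S
    rwa [hline] at this
  have hg2 : 0 ≤ a + t2 * c := by
    have := hmemP _ ht2S
    rwa [hline] at this
  -- final inequality
  rcases eq_or_lt_of_le ha0 with ha | ha
  · rw [← ha, zero_div, Real.log_zero, abs_zero, mul_zero]
    have := Real.log_nonneg hCRge
    positivity
  rcases eq_or_lt_of_le hb0 with hb | hb
  · rw [← hb, div_zero, Real.log_zero, abs_zero, mul_zero]
    have := Real.log_nonneg hCRge
    positivity
  -- main case : both positive
  have hba : b / a ≤ r1 * r2 := by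
    have h1 : b / a ≤ r1 := by
      rw [hr1_def, div_le_div_iff₀ ha (by linarith), hbac]
      nlinarith [hg1]
    calc b / a ≤ r1 := h1
      _ ≤ r1 * r2 := le_mul_of_one_le_right hr1pos.le hr2ge
  have hab : a / b ≤ r1 * r2 := by
    have h1 : a / b ≤ r2 := by
      rw [hr2_def, div_le_div_iff₀ hb (by linarith), hbac]
      nlinarith [hg2]
    calc a / b ≤ r2 := h1
      _ ≤ r1 * r2 := le_mul_of_one_le_left hr2pos.le hr1ge
  have hlog1 : Real.log (a / b) ≤ Real.log (r1 * r2) :=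
    Real.log_le_log (div_pos ha hb) hab
  have hlog2 : Real.log (b / a) ≤ Real.log (r1 * r2) :=
    Real.log_le_log (div_pos hb ha) hba
  rw [Real.log_div hb.ne' ha.ne'] at hlog2
  rw [Real.log_div ha.ne' hb.ne'] at hlog1
  have habs : |Real.log (a / b)| ≤ Real.log (r1 * r2) := by
    rw [Real.log_div ha.ne' hb.ne', abs_le]
    constructor <;> linarith
  linarith
end

section
/- The map Φ : int P → ℝⁿ defined by Φ(x) = Σ_{i=1}^m log(f_i(x)) · ∇f_i is Lipschitz continuous from (int P, d) with the Hilbert metric to ℝⁿ with the Euclidean metric; explicitly, ‖Φ(x) − Φ(y)‖₂ ≤ 2mR · d(x,y) for all x, y ∈ int P, where R = max_i ‖∇f_i‖₂. -/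
open RealInnerProductSpace

/-- Scalar key inequality: if an affine function `t ↦ u + t*(v-u)` is positive at `0` and `1`
and nonnegative at `t1 < 0` and `t2 > 1`, then `|log u - log v|` is bounded by the log of the
cross-ratio factor. -/
lemma phi_lip_log_ratio {u v t1 t2 : ℝ} (hu : 0 < u) (hv : 0 < v)
    (ht1 : t1 < 0) (ht2 : 1 < t2)
    (h1 : 0 ≤ u + t1 * (v - u)) (h2 : 0 ≤ u + t2 * (v - u)) :
    |Real.log u - Real.log v| ≤ Real.log (((1 - t1) / (-t1)) * (t2 / (t2 - 1))) := by
  have ht1' : (0:ℝ) < -t1 := by linarith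
  have ht2' : (0:ℝ) < t2 - 1 := by linarith
  have hr1 : (1:ℝ) ≤ (1 - t1) / (-t1) := by
    rw [le_div_iff₀ ht1']; linarith
  have hr2 : (1:ℝ) ≤ t2 / (t2 - 1) := by
    rw [le_div_iff₀ ht2']; linarith
  have huv : u / v ≤ ((1 - t1) / (-t1)) * (t2 / (t2 - 1)) := by
    have : u / v ≤ t2 / (t2 - 1) := by
      rw [div_le_div_iff₀ hv ht2']; nlinarith
    calc u / v ≤ t2 / (t2 - 1) := this
      _ ≤ ((1 - t1) / (-t1)) * (t2 / (t2 - 1)) := by nlinarith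
  have hvu : v / u ≤ ((1 - t1) / (-t1)) * (t2 / (t2 - 1)) := by
    have : v / u ≤ (1 - t1) / (-t1) := by
      rw [div_le_div_iff₀ hu ht1']; nlinarith
    calc v / u ≤ (1 - t1) / (-t1) := this
      _ ≤ ((1 - t1) / (-t1)) * (t2 / (t2 - 1)) := by nlinarith
  rw [abs_le]
  constructor
  · have := Real.log_le_log (div_pos hv hu) hvu
    rw [Real.log_div hv.ne' hu.ne'] at this
    linarith
  · have := Real.log_le_log (div_pos hu hv) huv
    rw [Real.log_div hu.ne' hv.ne'] at this
    linarith

/-- The chord through two interior points of a compact set hits the frontier on both sides. -/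
lemma phi_lip_exists_chord {E : Type*} [NormedAddCommGroup E] [NormedSpace ℝ E]
    {P : Set E} (hPcomp : IsCompact P) {x y : E}
    (hx : x ∈ interior P) (hy : y ∈ interior P) (hxy : x ≠ y) :
    ∃ t1 t2 : ℝ, t1 < 0 ∧ 1 < t2 ∧
      x + t1 • (y - x) ∈ frontier P ∧ x + t2 • (y - x) ∈ frontier P := by
  have hPcl : IsClosed P := hPcomp.isClosed
  set L : ℝ → E := fun t => x + t • (y - x) with hLdef
  have hLc : Continuous L := by
    apply Continuous.add continuous_const
    exact Continuous.smul continuous_id continuous_const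
  set S : Set ℝ := L ⁻¹' P with hSdef
  have hScl : IsClosed S := hPcl.preimage hLc
  have hyx : (0:ℝ) < ‖y - x‖ := by
    rw [norm_pos_iff, sub_ne_zero]; exact fun h => hxy h.symm
  obtain ⟨C, hC⟩ := hPcomp.isBounded.exists_norm_le
  have hbound : ∀ t ∈ S, |t| ≤ (C + ‖x‖) / ‖y - x‖ := by
    intro t ht
    have h1 : ‖L t‖ ≤ C := hC _ ht
    have h2 : ‖t • (y - x)‖ - ‖x‖ ≤ ‖L t‖ := by
      have := norm_add_le x (t • (y - x))
      have h3 : ‖t • (y - x)‖ ≤ ‖x‖ + ‖L t‖ := by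
        calc ‖t • (y - x)‖ = ‖(x + t • (y - x)) - x‖ := by congr 1; abel
          _ ≤ ‖x + t • (y - x)‖ + ‖x‖ := norm_sub_le _ _
          _ = ‖x‖ + ‖L t‖ := by rw [add_comm]
      linarith
    rw [norm_smul, Real.norm_eq_abs] at h2
    rw [le_div_iff₀ hyx]; nlinarith
  have hBb : BddBelow S := ⟨-((C + ‖x‖) / ‖y - x‖), fun t ht => by
    have := hbound t ht; rw [abs_le] at this; linarith [this.1]⟩
  have hBa : BddAbove S := ⟨(C + ‖x‖) / ‖y - x‖, fun t ht => by
    have := hbound t ht; rw [abs_le] at this; exact this.2⟩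
  have h0S : (0:ℝ) ∈ S := by
    show L 0 ∈ P
    simp only [hLdef, zero_smul, add_zero]
    exact interior_subset hx
  have hSne : S.Nonempty := ⟨0, h0S⟩
  have hU : IsOpen (L ⁻¹' interior P) := isOpen_interior.preimage hLc
  have hsub : L ⁻¹' interior P ⊆ S := fun t ht => show L t ∈ P from interior_subset ht
  -- 0 is in the open preimage of the interior
  have h0U : (0:ℝ) ∈ L ⁻¹' interior P := by
    show L 0 ∈ interior P
    simp only [hLdef, zero_smul, add_zero]
    exact hx
  have h1U : (1:ℝ) ∈ L ⁻¹' interior P := by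
    show L 1 ∈ interior P
    simp only [hLdef, one_smul, add_sub_cancel]
    exact hy
  obtain ⟨ε, hε, hball⟩ := Metric.isOpen_iff.mp hU 0 h0U
  obtain ⟨δ, hδ, hball'⟩ := Metric.isOpen_iff.mp hU 1 h1U
  set t1 := sInf S with ht1def
  set t2 := sSup S with ht2def
  have ht1S : t1 ∈ S := hScl.csInf_mem hSne hBb
  have ht2S : t2 ∈ S := hScl.csSup_mem hSne hBa
  have hmε : -(ε/2) ∈ S := hsub (hball (by
    simp only [Metric.mem_ball, Real.dist_eq, sub_zero]
    rw [abs_of_neg (by linarith : -(ε/2) < 0)]; linarith))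
  have hpδ : 1 + δ/2 ∈ S := hsub (hball' (by
    simp only [Metric.mem_ball, Real.dist_eq]
    rw [abs_of_pos (by linarith : (0:ℝ) < 1 + δ/2 - 1)]; linarith))
  have ht1 : t1 < 0 := lt_of_le_of_lt (csInf_le hBb hmε) (by linarith)
  have ht2 : 1 < t2 := lt_of_lt_of_le (by linarith) (le_csSup hBa hpδ)
  refine ⟨t1, t2, ht1, ht2, ?_, ?_⟩
  · rw [hPcl.frontier_eq]
    refine ⟨ht1S, fun hint => ?_⟩
    obtain ⟨ε', hε', hball''⟩ := Metric.isOpen_iff.mp hU t1 hint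
    have : t1 - ε'/2 ∈ S := hsub (hball'' (by
      simp only [Metric.mem_ball, Real.dist_eq]
      rw [abs_of_neg (by linarith : t1 - ε'/2 - t1 < 0)]; linarith))
    have := csInf_le hBb this
    linarith
  · rw [hPcl.frontier_eq]
    refine ⟨ht2S, fun hint => ?_⟩
    obtain ⟨ε', hε', hball''⟩ := Metric.isOpen_iff.mp hU t2 hint
    have : t2 + ε'/2 ∈ S := hsub (hball'' (by
      simp only [Metric.mem_ball, Real.dist_eq]
      rw [abs_of_pos (by linarith : (0:ℝ) < t2 + ε'/2 - t2)]; linarith))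
    have := le_csSup hBa this
    linarith

/-- An affine constraint with nonzero gradient is strictly positive on the interior. -/
lemma phi_lip_pos {n m : ℕ} (g : Fin m → EuclideanSpace ℝ (Fin n)) (b : Fin m → ℝ)
    (P : Set (EuclideanSpace ℝ (Fin n)))
    (hP : P = {x | ∀ i, 0 ≤ ⟪g i, x⟫ + b i})
    {x : EuclideanSpace ℝ (Fin n)} (hx : x ∈ interior P) (i : Fin m) (hgi : g i ≠ 0) :
    0 < ⟪g i, x⟫ + b i := by
  obtain ⟨ε, hε, hball⟩ := Metric.isOpen_iff.mp isOpen_interior x hx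
  have hg : (0:ℝ) < ‖g i‖ := norm_pos_iff.mpr hgi
  set c : ℝ := ε / (2 * ‖g i‖) with hc
  have hcpos : 0 < c := by positivity
  have hz : x - c • g i ∈ P := by
    apply interior_subset
    apply hball
    simp only [Metric.mem_ball, dist_eq_norm]
    have : x - c • g i - x = -(c • g i) := by abel
    rw [this, norm_neg, norm_smul, Real.norm_eq_abs, abs_of_pos hcpos]
    have hce : c * ‖g i‖ = ε / 2 := by
      rw [hc]; field_simp
    rw [hce]; linarith
  rw [hP] at hz
  have := hz i
  rw [inner_sub_right, real_inner_smul_right, real_inner_self_eq_norm_sq] at this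
  nlinarith [mul_pos hcpos (pow_pos hg 2)]

/-- The map `Φ(x) = Σᵢ log(fᵢ(x)) ∇fᵢ` is Lipschitz from `(int P, d)` to Euclidean space,
with Lipschitz constant `2mR` where `R = maxᵢ ‖∇fᵢ‖`. -/
theorem phi_lipschitz {n m : ℕ}
    (g : Fin m → EuclideanSpace ℝ (Fin n)) (b : Fin m → ℝ)
    (P : Set (EuclideanSpace ℝ (Fin n)))
    (hP : P = {x | ∀ i, 0 ≤ ⟪g i, x⟫ + b i})
    (hPcomp : IsCompact P) (hPint : (interior P).Nonempty)
    (R : ℝ) (hR : ∀ i, ‖g i‖ ≤ R)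
    (d : EuclideanSpace ℝ (Fin n) → EuclideanSpace ℝ (Fin n) → ℝ)
    (hd0 : ∀ x, d x x = 0)
    (hd : ∀ x y, x ∈ interior P → y ∈ interior P → x ≠ y →
      ∀ a1 a2 : EuclideanSpace ℝ (Fin n), a1 ∈ frontier P → a2 ∈ frontier P →
      (∃ t1 t2 : ℝ, t1 < 0 ∧ 1 < t2 ∧ a1 = x + t1 • (y - x) ∧ a2 = x + t2 • (y - x)) →
      d x y = (1/2) * Real.log ((‖y - a1‖ / ‖x - a1‖) * (‖x - a2‖ / ‖y - a2‖)))
    (Φ : EuclideanSpace ℝ (Fin n) → EuclideanSpace ℝ (Fin n))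
    (hΦ : ∀ x, Φ x = ∑ i, Real.log (⟪g i, x⟫ + b i) • g i) :
    ∀ x ∈ interior P, ∀ y ∈ interior P,
      ‖Φ x - Φ y‖ ≤ 2 * m * R * d x y := by
  intro x hx y hy
  by_cases hxy : x = y
  · subst hxy
    rw [sub_self, norm_zero, hd0 x, mul_zero]
  · obtain ⟨t1, t2, ht1, ht2, ha1f, ha2f⟩ := phi_lip_exists_chord hPcomp hx hy hxy
    set a1 := x + t1 • (y - x) with ha1def
    set a2 := x + t2 • (y - x) with ha2def
    have hPcl : IsClosed P := hPcomp.isClosed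
    have hdxy := hd x y hx hy hxy a1 a2 ha1f ha2f ⟨t1, t2, ht1, ht2, rfl, rfl⟩
    have hc : (0:ℝ) < ‖y - x‖ := by
      rw [norm_pos_iff, sub_ne_zero]; exact fun h => hxy h.symm
    -- compute the norms
    have e1 : ‖y - a1‖ = (1 - t1) * ‖y - x‖ := by
      have : y - a1 = (1 - t1) • (y - x) := by rw [ha1def]; module
      rw [this, norm_smul, Real.norm_eq_abs, abs_of_pos (by linarith)]
    have e2 : ‖x - a1‖ = (-t1) * ‖y - x‖ := by
      have : x - a1 = (-t1) • (y - x) := by rw [ha1def]; module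
      rw [this, norm_smul, Real.norm_eq_abs, abs_of_pos (by linarith)]
    have e3 : ‖x - a2‖ = t2 * ‖y - x‖ := by
      have : x - a2 = (-t2) • (y - x) := by rw [ha2def]; module
      rw [this, norm_smul, Real.norm_eq_abs, abs_of_neg (by linarith : -t2 < 0)]
      ring_nf
    have e4 : ‖y - a2‖ = (t2 - 1) * ‖y - x‖ := by
      have : y - a2 = (1 - t2) • (y - x) := by rw [ha2def]; module
      rw [this, norm_smul, Real.norm_eq_abs, abs_of_neg (by linarith : 1 - t2 < 0)]
      ring_nf
    set r1 : ℝ := (1 - t1) / (-t1) with hr1def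
    set r2 : ℝ := t2 / (t2 - 1) with hr2def
    have hratio1 : ‖y - a1‖ / ‖x - a1‖ = r1 := by
      rw [e1, e2, hr1def, mul_div_mul_right _ _ hc.ne']
    have hratio2 : ‖x - a2‖ / ‖y - a2‖ = r2 := by
      rw [e3, e4, hr2def, mul_div_mul_right _ _ hc.ne']
    rw [hratio1, hratio2] at hdxy
    have hr1ge : (1:ℝ) ≤ r1 := by
      rw [hr1def, le_div_iff₀ (by linarith : (0:ℝ) < -t1)]; linarith
    have hr2ge : (1:ℝ) ≤ r2 := by
      rw [hr2def, le_div_iff₀ (by linarith : (0:ℝ) < t2 - 1)]; linarith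
    have hrge : (1:ℝ) ≤ r1 * r2 := by nlinarith
    have h2d : 2 * d x y = Real.log (r1 * r2) := by rw [hdxy]; ring
    have hdnn : 0 ≤ d x y := by
      have := Real.log_nonneg hrge; linarith
    -- membership of a1, a2 in P
    have ha1P : a1 ∈ P := hPcl.frontier_subset ha1f
    have ha2P : a2 ∈ P := hPcl.frontier_subset ha2f
    rw [hP] at ha1P ha2P
    -- per-term bound
    have key : ∀ i : Fin m,
        ‖Real.log (⟪g i, x⟫ + b i) • g i - Real.log (⟪g i, y⟫ + b i) • g i‖
          ≤ 2 * d x y * R := by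
      intro i
      have hR0 : 0 ≤ R := le_trans (norm_nonneg _) (hR i)
      rw [← sub_smul, norm_smul, Real.norm_eq_abs]
      by_cases hgi : g i = 0
      · rw [hgi, norm_zero, mul_zero]
        positivity
      · have hu : 0 < ⟪g i, x⟫ + b i := phi_lip_pos g b P hP hx i hgi
        have hv : 0 < ⟪g i, y⟫ + b i := phi_lip_pos g b P hP hy i hgi
        have ha1i := ha1P i
        have ha2i := ha2P i
        have exp1 : ⟪g i, a1⟫ + b i
            = (⟪g i, x⟫ + b i) + t1 * ((⟪g i, y⟫ + b i) - (⟪g i, x⟫ + b i)) := by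
          rw [ha1def, inner_add_right, real_inner_smul_right, inner_sub_right]; ring
        have exp2 : ⟪g i, a2⟫ + b i
            = (⟪g i, x⟫ + b i) + t2 * ((⟪g i, y⟫ + b i) - (⟪g i, x⟫ + b i)) := by
          rw [ha2def, inner_add_right, real_inner_smul_right, inner_sub_right]; ring
        rw [exp1] at ha1i
        rw [exp2] at ha2i
        have habs := phi_lip_log_ratio hu hv ht1 ht2 ha1i ha2i
        rw [← hr1def, ← hr2def, ← h2d] at habs
        have habs' : |Real.log (⟪g i, x⟫ + b i) - Real.log (⟪g i, y⟫ + b i)| ≤ 2 * d x y :=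
          habs
        calc |Real.log (⟪g i, x⟫ + b i) - Real.log (⟪g i, y⟫ + b i)| * ‖g i‖
            ≤ (2 * d x y) * R := by
              apply mul_le_mul habs' (hR i) (norm_nonneg _)
              linarith
          _ = 2 * d x y * R := by ring
    calc ‖Φ x - Φ y‖
        = ‖∑ i, (Real.log (⟪g i, x⟫ + b i) • g i - Real.log (⟪g i, y⟫ + b i) • g i)‖ := by
          rw [hΦ, hΦ, ← Finset.sum_sub_distrib]
      _ ≤ ∑ i, ‖Real.log (⟪g i, x⟫ + b i) • g i - Real.log (⟪g i, y⟫ + b i) • g i‖ :=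
          norm_sum_le _ _
      _ ≤ ∑ _i : Fin m, 2 * d x y * R := Finset.sum_le_sum (fun i _ => key i)
      _ = m * (2 * d x y * R) := by
          rw [Finset.sum_const, Finset.card_univ, Fintype.card_fin, nsmul_eq_mul]
      _ = 2 * m * R * d x y := by ring
end

section
/- The map Φ(x) = Σ_{i=1}^m log(f_i(x)) ∇f_i is injective on the interior of the polytope P; in fact, for distinct x, y ∈ int P one has ⟨Φ(x) − Φ(y), x − y⟩ > 0. -/
open RealInnerProductSpace

/-- The map `Φ(x) = Σᵢ log(fᵢ(x)) ∇fᵢ` satisfies `⟨Φ(x) − Φ(y), x − y⟩ > 0` for distinct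
interior points, and in particular it is injective on the interior of the polytope. -/
theorem phi_injective {n m : ℕ}
    (g : Fin m → EuclideanSpace ℝ (Fin n)) (b : Fin m → ℝ)
    (P : Set (EuclideanSpace ℝ (Fin n)))
    (hP : P = {x | ∀ i, 0 ≤ ⟪g i, x⟫ + b i})
    (hPcomp : IsCompact P) (hPint : (interior P).Nonempty)
    (Φ : EuclideanSpace ℝ (Fin n) → EuclideanSpace ℝ (Fin n))
    (hΦ : ∀ x, Φ x = ∑ i, Real.log (⟪g i, x⟫ + b i) • g i) :
    (∀ x ∈ interior P, ∀ y ∈ interior P, x ≠ y → 0 < ⟪Φ x - Φ y, x - y⟫) ∧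
      Set.InjOn Φ (interior P) := by
  -- positivity of constraints at interior points (when the gradient is nonzero)
  have hpos : ∀ (i : Fin m), g i ≠ 0 → ∀ x ∈ interior P, 0 < ⟪g i, x⟫ + b i := by
    intro i hgi x hx
    rcases Metric.isOpen_iff.mp isOpen_interior x hx with ⟨ε, hε, hball⟩
    have hx' : x ∈ P := interior_subset hx
    have h0 : 0 ≤ ⟪g i, x⟫ + b i := by rw [hP] at hx'; exact hx' i
    rcases h0.lt_or_eq with h | h
    · exact h
    exfalso
    have hgnorm : (0:ℝ) < ‖g i‖ := norm_pos_iff.mpr hgi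
    set c : ℝ := ε / 2 / ‖g i‖ with hc
    have hcpos : 0 < c := by positivity
    set z : EuclideanSpace ℝ (Fin n) := x - c • g i with hz
    have hdist : dist z x < ε := by
      rw [hz, dist_eq_norm, sub_sub_cancel_left, norm_neg, norm_smul,
        Real.norm_of_nonneg hcpos.le, hc, div_mul_cancel₀ _ hgnorm.ne']
      linarith
    have hzP : z ∈ P := interior_subset (hball hdist)
    rw [hP] at hzP
    have := hzP i
    rw [hz, inner_sub_right, real_inner_smul_right, real_inner_self_eq_norm_sq] at this
    nlinarith [mul_pos hcpos (pow_pos hgnorm 2)]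
  -- main inequality
  have main : ∀ x ∈ interior P, ∀ y ∈ interior P, x ≠ y → 0 < ⟪Φ x - Φ y, x - y⟫ := by
    intro x hx y hy hxy
    set a : Fin m → ℝ := fun i => ⟪g i, x⟫ + b i with ha
    set a' : Fin m → ℝ := fun i => ⟪g i, y⟫ + b i with ha'
    have hinner : ∀ i : Fin m, ⟪g i, x - y⟫ = a i - a' i := by
      intro i; simp only [ha, ha', inner_sub_right]; ring
    have hsum : ⟪Φ x - Φ y, x - y⟫ =
        ∑ i, (Real.log (a i) - Real.log (a' i)) * (a i - a' i) := by
      rw [hΦ, hΦ, ← Finset.sum_sub_distrib, sum_inner]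
      refine Finset.sum_congr rfl fun i _ => ?_
      rw [← sub_smul, real_inner_smul_left, hinner i]
    rw [hsum]
    -- each term is nonnegative
    have hterm : ∀ i : Fin m, 0 ≤ (Real.log (a i) - Real.log (a' i)) * (a i - a' i) := by
      intro i
      rcases eq_or_ne (a i) (a' i) with h | h
      · simp [h]
      have hgi : g i ≠ 0 := by
        intro hg
        apply h
        simp [ha, ha', hg]
      have h1 : 0 < a i := hpos i hgi x hx
      have h2 : 0 < a' i := hpos i hgi y hy
      rcases lt_or_gt_of_ne h with hlt | hgt
      · have := Real.log_lt_log h1 hlt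
        nlinarith
      · have := Real.log_lt_log h2 hgt
        nlinarith
    -- some term is positive
    have hexists : ∃ i : Fin m, a i ≠ a' i := by
      by_contra hall
      push_neg at hall
      -- then the whole line x + t(x-y) lies in P, contradicting boundedness
      obtain ⟨R, hR⟩ := hPcomp.isBounded.exists_norm_le
      set v : EuclideanSpace ℝ (Fin n) := x - y with hv
      have hvne : v ≠ 0 := sub_ne_zero.mpr hxy
      have hvnorm : (0:ℝ) < ‖v‖ := norm_pos_iff.mpr hvne
      have hline : ∀ t : ℝ, x + t • v ∈ P := by
        intro t
        rw [hP]
        intro i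
        have hgv : ⟪g i, v⟫ = 0 := by
          rw [hinner i, hall i, sub_self]
        have hxP : x ∈ P := interior_subset hx
        rw [hP] at hxP
        have := hxP i
        rw [inner_add_right, real_inner_smul_right, hgv]
        simpa using this
      set t : ℝ := (R + ‖x‖ + 1) / ‖v‖ with ht
      have hmem := hline t
      have hle := hR _ hmem
      have hxR : ‖x‖ ≤ R := hR x (interior_subset hx)
      have h1 : ‖t • v‖ ≤ ‖x + t • v‖ + ‖x‖ := by
        have := norm_sub_le (x + t • v) x
        rwa [add_sub_cancel_left] at this
      have h2 : t * ‖v‖ ≤ ‖t • v‖ := by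
        rw [norm_smul, Real.norm_eq_abs]
        exact mul_le_mul_of_nonneg_right (le_abs_self t) hvnorm.le
      have h3 : t * ‖v‖ = R + ‖x‖ + 1 := by
        rw [ht, div_mul_cancel₀ _ hvnorm.ne']
      linarith
    obtain ⟨i, hi⟩ := hexists
    apply Finset.sum_pos' (fun j _ => hterm j) ⟨i, Finset.mem_univ i, ?_⟩
    have hgi : g i ≠ 0 := by
      intro hg; apply hi; simp [ha, ha', hg]
    have h1 : 0 < a i := hpos i hgi x hx
    have h2 : 0 < a' i := hpos i hgi y hy
    rcases lt_or_gt_of_ne hi with hlt | hgt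
    · have := Real.log_lt_log h1 hlt
      nlinarith
    · have := Real.log_lt_log h2 hgt
      nlinarith
  refine ⟨main, fun x hx y hy hxy => ?_⟩
  by_contra hne
  have := main x hx y hy hne
  rw [hxy, sub_self, inner_zero_left] at this
  exact lt_irrefl 0 this
end

section
/- Let Φ : int P → ℝⁿ be the map Φ(x) = Σ_i log(f_i(x)) ∇f_i for a compact polytope P. If there is a constant C > 0 such that ‖dΦ_x(v)‖₂ ≥ C ‖v‖_x for all x ∈ int P and all tangent vectors v (where ‖·‖_x is the Hilbert Finsler norm), and Φ is Lipschitz from (int P, d) to ℝⁿ, then Φ is surjective onto ℝⁿ and is a bilipschitz homeomorphism from (int P, d) onto (ℝⁿ, ‖·‖₂), with Φ⁻¹ having Lipschitz constant 1/C. -/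
open RealInnerProductSpace

namespace PropAB

variable {n m : ℕ}

local notation "E" => EuclideanSpace ℝ (Fin n)

/-- the polytope as an explicit set -/
def Pset (g : Fin m → EuclideanSpace ℝ (Fin n)) (b : Fin m → ℝ) : Set (EuclideanSpace ℝ (Fin n)) :=
  {x | ∀ i, 0 ≤ ⟪g i, x⟫ + b i}

lemma mem_Pset {g : Fin m → E} {b : Fin m → ℝ} {x : E} :
    x ∈ Pset g b ↔ ∀ i, 0 ≤ ⟪g i, x⟫ + b i := Iff.rfl

lemma f_affine (g : E) (c : ℝ) (x v : E) (t : ℝ) :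
    ⟪g, x + t • v⟫ + c = (⟪g, x⟫ + c) + t * ⟪g, v⟫ := by
  rw [inner_add_right, real_inner_smul_right]; ring

lemma isClosed_Pset (g : Fin m → E) (b : Fin m → ℝ) : IsClosed (Pset g b) := by
  have : Pset g b = ⋂ i, {x : E | 0 ≤ ⟪g i, x⟫ + b i} := by
    ext x; simp [Pset, Set.mem_iInter]
  rw [this]
  exact isClosed_iInter fun i => isClosed_le continuous_const
    ((continuous_const.inner continuous_id).add continuous_const)

lemma convex_Pset (g : Fin m → E) (b : Fin m → ℝ) : Convex ℝ (Pset g b) := by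
  intro x hx y hy a c ha hc hac
  intro i
  have hx' := hx i
  have hy' := hy i
  have : ⟪g i, a • x + c • y⟫ + b i = a * (⟪g i, x⟫ + b i) + c * (⟪g i, y⟫ + b i) := by
    rw [inner_add_right, real_inner_smul_right, real_inner_smul_right]
    have : a*(b i) + c*(b i) = b i := by rw [← add_mul, hac, one_mul]
    linarith
  rw [this]
  positivity

lemma int_pos (g : Fin m → E) (b : Fin m → ℝ) {x : E} (hx : x ∈ interior (Pset g b)) :
    ∀ i, g i ≠ 0 → 0 < ⟪g i, x⟫ + b i := by
  intro i hgi
  obtain ⟨ε, hε, hball⟩ := Metric.mem_nhds_iff.mp (mem_interior_iff_mem_nhds.mp hx)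
  have hgn : 0 < ‖g i‖ := norm_pos_iff.mpr hgi
  set t : ℝ := ε / (2 * ‖g i‖) with ht
  have htpos : 0 < t := by positivity
  have hmem : x - t • g i ∈ Pset g b := by
    apply hball
    rw [Metric.mem_ball, dist_eq_norm]
    have : x - t • g i - x = -(t • g i) := by abel
    rw [this, norm_neg, norm_smul, Real.norm_eq_abs, abs_of_pos htpos]
    have h3 : t * ‖g i‖ = ε/2 := by rw [ht]; field_simp
    rw [h3]; linarith
  have h2 := hmem i
  have hin : ⟪g i, x - t • g i⟫ + b i = (⟪g i, x⟫ + b i) - t * ‖g i‖^2 := by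
    rw [inner_sub_right, real_inner_smul_right, real_inner_self_eq_norm_sq]; ring
  rw [hin] at h2
  nlinarith [mul_pos htpos (pow_pos hgn 2)]

lemma mem_int (g : Fin m → E) (b : Fin m → ℝ) (hne : (Pset g b).Nonempty) {x : E}
    (hx : ∀ i, g i ≠ 0 → 0 < ⟪g i, x⟫ + b i) : x ∈ interior (Pset g b) := by
  obtain ⟨x₀, hx₀⟩ := hne
  set U : Set (EuclideanSpace ℝ (Fin n)) := ⋂ i, {y | g i ≠ 0 → 0 < ⟪g i, y⟫ + b i} with hU
  have hUopen : IsOpen U := by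
    apply isOpen_iInter_of_finite
    intro i
    by_cases hgi : g i = 0
    · simp [hgi]
    · have : {y : EuclideanSpace ℝ (Fin n) | g i ≠ 0 → 0 < ⟪g i, y⟫ + b i}
          = {y | 0 < ⟪g i, y⟫ + b i} := by
        ext y; simp [hgi]
      rw [this]
      exact isOpen_lt continuous_const
        ((continuous_const.inner continuous_id).add continuous_const)
  have hUP : U ⊆ Pset g b := by
    intro y hy i
    by_cases hgi : g i = 0
    · have := hx₀ i
      rw [hgi] at this ⊢
      simpa using this
    · exact le_of_lt (Set.mem_iInter.mp hy i hgi)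
  exact interior_maximal hUP hUopen (Set.mem_iInter.mpr fun i hgi => hx i hgi)

lemma frontier_binding (g : Fin m → E) (b : Fin m → ℝ) (hne : (Pset g b).Nonempty) {a : E}
    (ha : a ∈ frontier (Pset g b)) : a ∈ Pset g b ∧ ∃ i, g i ≠ 0 ∧ ⟪g i, a⟫ + b i = 0 := by
  rw [(isClosed_Pset g b).frontier_eq] at ha
  obtain ⟨haP, hni⟩ := ha
  refine ⟨haP, ?_⟩
  by_contra hcon
  push_neg at hcon
  apply hni
  apply mem_int g b hne
  intro i hgi
  exact lt_of_le_of_ne (haP i) (Ne.symm (hcon i hgi))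

lemma exit_time (g : Fin m → E) (b : Fin m → ℝ) (hc : IsCompact (Pset g b)) {x v : E}
    (hx : x ∈ interior (Pset g b)) (hv : v ≠ 0) :
    ∃ T : ℝ, 0 < T ∧ x + T • v ∈ frontier (Pset g b) := by
  obtain ⟨R, hR⟩ := hc.isBounded.exists_norm_le
  have hvn : 0 < ‖v‖ := norm_pos_iff.mpr hv
  set S : Set ℝ := {t | 0 ≤ t ∧ x + t • v ∈ Pset g b} with hS
  have hS0 : (0:ℝ) ∈ S := ⟨le_refl 0, by simpa using interior_subset hx⟩
  have hSne : S.Nonempty := ⟨0, hS0⟩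
  have hSbdd : BddAbove S := by
    refine ⟨(R + ‖x‖) / ‖v‖, fun t ht => ?_⟩
    have h1 : ‖x + t • v‖ ≤ R := hR _ ht.2
    have h2 : ‖t • v‖ ≤ ‖x + t • v‖ + ‖x‖ := by
      have := norm_add_le (x + t • v) (-x)
      simpa [add_assoc] using this
    rw [norm_smul, Real.norm_eq_abs, abs_of_nonneg ht.1] at h2
    rw [le_div_iff₀ hvn]
    linarith
  have hSclosed : IsClosed S := by
    have : S = Set.Ici (0:ℝ) ∩ (fun t : ℝ => x + t • v) ⁻¹' (Pset g b) := by
      ext t; simp [hS, Set.mem_Ici, And.comm]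
    rw [this]
    exact isClosed_Ici.inter ((isClosed_Pset g b).preimage (by continuity))
  set T := sSup S with hT
  have hTS : T ∈ S := hSclosed.csSup_mem hSne hSbdd
  obtain ⟨ε, hε, hball⟩ := Metric.mem_nhds_iff.mp (mem_interior_iff_mem_nhds.mp hx)
  have hδ : (0:ℝ) < ε / (2 * ‖v‖) := by positivity
  have hsmall : ∀ δ : ℝ, 0 ≤ δ → δ < ε / ‖v‖ → x + δ • v ∈ Pset g b := by
    intro δ h0 hδε
    apply hball
    rw [Metric.mem_ball, dist_eq_norm]
    have : x + δ • v - x = δ • v := by abel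
    rw [this, norm_smul, Real.norm_eq_abs, abs_of_nonneg h0]
    have h4 : δ * ‖v‖ < (ε / ‖v‖) * ‖v‖ := mul_lt_mul_of_pos_right hδε hvn
    rwa [div_mul_cancel₀ _ (ne_of_gt hvn)] at h4
  have hTpos : 0 < T := by
    have : ε / (2 * ‖v‖) ∈ S := by
      refine ⟨le_of_lt hδ, hsmall _ (le_of_lt hδ) ?_⟩
      rw [div_lt_div_iff₀ (by positivity) hvn]
      nlinarith
    exact lt_of_lt_of_le hδ (le_csSup hSbdd this)
  refine ⟨T, hTpos, ?_⟩
  rw [(isClosed_Pset g b).frontier_eq]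
  refine ⟨hTS.2, fun hint => ?_⟩
  obtain ⟨ε', hε', hball'⟩ := Metric.mem_nhds_iff.mp (mem_interior_iff_mem_nhds.mp hint)
  have hδ' : (0:ℝ) < ε' / (2 * ‖v‖) := by positivity
  have : T + ε' / (2 * ‖v‖) ∈ S := by
    constructor
    · linarith [hTS.1]
    · apply hball'
      rw [Metric.mem_ball, dist_eq_norm]
      have : x + (T + ε' / (2 * ‖v‖)) • v - (x + T • v) = (ε' / (2 * ‖v‖)) • v := by
        rw [add_smul]; abel
      rw [this, norm_smul, Real.norm_eq_abs, abs_of_pos hδ']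
      have h5 : ε' / (2 * ‖v‖) * ‖v‖ = ε'/2 := by field_simp
      rw [h5]; linarith
  have := le_csSup hSbdd this
  linarith

lemma no_ray (g : Fin m → E) (b : Fin m → ℝ) (hc : IsCompact (Pset g b)) {x v : E}
    (hx : x ∈ Pset g b) (hv : v ≠ 0) (h : ∀ i, ⟪g i, v⟫ = 0) : False := by
  obtain ⟨R, hR⟩ := hc.isBounded.exists_norm_le
  have hvn : 0 < ‖v‖ := norm_pos_iff.mpr hv
  set t : ℝ := (R + ‖x‖ + 1) / ‖v‖ with ht
  have hmem : x + t • v ∈ Pset g b := by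
    intro i
    rw [f_affine, h i]
    simpa using hx i
  have h1 : ‖x + t • v‖ ≤ R := hR _ hmem
  have h2 : ‖t • v‖ ≤ ‖x + t • v‖ + ‖x‖ := by
    have := norm_add_le (x + t • v) (-x)
    simpa [add_assoc] using this
  have hxnorm : (0:ℝ) ≤ ‖x‖ := norm_nonneg x
  have hRpos : 0 ≤ R := le_trans (norm_nonneg _) h1
  have htpos : 0 < t := by positivity
  rw [norm_smul, Real.norm_eq_abs, abs_of_pos htpos, ht, div_mul_cancel₀] at h2
  · linarith
  · exact ne_of_gt hvn


/-- the map -/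
noncomputable def Phi (g : Fin m → E) (b : Fin m → ℝ) (x : E) : E :=
  ∑ i, Real.log (⟪g i, x⟫ + b i) • g i

lemma deriv_package (g : Fin m → E) (b : Fin m → ℝ) (hc : IsCompact (Pset g b)) {x : E}
    (hx : x ∈ interior (Pset g b)) :
    ∃ e : EuclideanSpace ℝ (Fin n) ≃L[ℝ] EuclideanSpace ℝ (Fin n),
      HasStrictFDerivAt (Phi g b) (e : EuclideanSpace ℝ (Fin n) →L[ℝ] EuclideanSpace ℝ (Fin n)) x ∧
      ∀ v, e v = ∑ i, (⟪g i, v⟫ / (⟪g i, x⟫ + b i)) • g i := by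
  classical
  set B : EuclideanSpace ℝ (Fin n) →L[ℝ] EuclideanSpace ℝ (Fin n) :=
    ∑ i, ((⟪g i, x⟫ + b i)⁻¹ • innerSL ℝ (g i)).smulRight (g i) with hB
  have hBapp : ∀ v, B v = ∑ i, (⟪g i, v⟫ / (⟪g i, x⟫ + b i)) • g i := by
    intro v
    rw [hB, ContinuousLinearMap.sum_apply]
    refine Finset.sum_congr rfl fun i _ => ?_
    rw [ContinuousLinearMap.smulRight_apply, ContinuousLinearMap.smul_apply, innerSL_apply_apply,
      smul_eq_mul, div_eq_inv_mul]
  have hderiv : HasStrictFDerivAt (Phi g b) B x := by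
    have : Phi g b = fun y => ∑ i, Real.log (⟪g i, y⟫ + b i) • g i := rfl
    rw [this, hB]
    apply HasStrictFDerivAt.fun_sum
    intro i _
    by_cases hgi : g i = 0
    · have h1 : (fun y : EuclideanSpace ℝ (Fin n) => Real.log (⟪g i, y⟫ + b i) • g i)
          = fun _ => (0 : EuclideanSpace ℝ (Fin n)) := by
        funext y; rw [hgi, smul_zero]
      have h2 : (((⟪g i, x⟫ + b i)⁻¹ • innerSL ℝ (g i)).smulRight (g i))
          = (0 : EuclideanSpace ℝ (Fin n) →L[ℝ] EuclideanSpace ℝ (Fin n)) := by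
        ext v
        rw [ContinuousLinearMap.smulRight_apply, hgi, smul_zero]
        rfl
      rw [h1, h2]
      exact hasStrictFDerivAt_const _ _
    · have hfi : 0 < ⟪g i, x⟫ + b i := int_pos g b hx i hgi
      have haff : HasStrictFDerivAt (fun y : EuclideanSpace ℝ (Fin n) => ⟪g i, y⟫ + b i)
          (innerSL ℝ (g i)) x := by
        exact ((innerSL ℝ (g i)).hasStrictFDerivAt).add_const (b i)
      have hlog := haff.log (ne_of_gt hfi)
      have := hlog.fun_smul (hasStrictFDerivAt_const (g i) x)
      simpa using this
  -- injectivity of B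
  have hinj : Function.Injective B := by
    rw [← ContinuousLinearMap.coe_coe B]
    rw [← LinearMap.ker_eq_bot, LinearMap.ker_eq_bot']
    intro v hv
    by_contra hv0
    have hBv : B v = 0 := hv
    have hquad : ∑ i, (⟪g i, x⟫ + b i)⁻¹ * (⟪g i, v⟫)^2 = 0 := by
      have : ⟪B v, v⟫ = ∑ i, (⟪g i, x⟫ + b i)⁻¹ * (⟪g i, v⟫)^2 := by
        rw [hBapp, sum_inner]
        refine Finset.sum_congr rfl fun i _ => ?_
        rw [real_inner_smul_left, div_eq_inv_mul]
        ring
      rw [hBv, inner_zero_left] at this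
      exact this.symm
    have hzero : ∀ i, ⟪g i, v⟫ = 0 := by
      intro i
      have hnn : ∀ j ∈ Finset.univ, (0:ℝ) ≤ (⟪g j, x⟫ + b j)⁻¹ * (⟪g j, v⟫)^2 := by
        intro j _
        have : (0:ℝ) ≤ ⟪g j, x⟫ + b j := interior_subset hx j
        positivity
      have := (Finset.sum_eq_zero_iff_of_nonneg hnn).mp hquad i (Finset.mem_univ i)
      by_cases hgi : g i = 0
      · rw [hgi, inner_zero_left]
      · have hfi : 0 < ⟪g i, x⟫ + b i := int_pos g b hx i hgi
        have h9 : (⟪g i, x⟫ + b i)⁻¹ > 0 := inv_pos.mpr hfi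
        have h10 : (⟪g i, v⟫:ℝ)^2 = 0 := by
          by_contra h11
          have h12 : 0 < (⟪g i, v⟫:ℝ)^2 := lt_of_le_of_ne (sq_nonneg _) (Ne.symm h11)
          nlinarith
        exact pow_eq_zero_iff two_ne_zero |>.mp h10
    exact no_ray g b hc (interior_subset hx) hv0 hzero
  have hsurj : Function.Surjective B := by
    have := (LinearMap.injective_iff_surjective (f := (B : EuclideanSpace ℝ (Fin n) →ₗ[ℝ] EuclideanSpace ℝ (Fin n)))).mp hinj
    exact this
  set e₀ : EuclideanSpace ℝ (Fin n) ≃ₗ[ℝ] EuclideanSpace ℝ (Fin n) :=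
    LinearEquiv.ofBijective (B : EuclideanSpace ℝ (Fin n) →ₗ[ℝ] EuclideanSpace ℝ (Fin n)) ⟨hinj, hsurj⟩ with he₀
  refine ⟨e₀.toContinuousLinearEquiv, ?_, ?_⟩
  · have hcoe : (e₀.toContinuousLinearEquiv : EuclideanSpace ℝ (Fin n) →L[ℝ] EuclideanSpace ℝ (Fin n)) = B := by
      ext v; rfl
    rw [hcoe]
    exact hderiv
  · intro v
    have : e₀.toContinuousLinearEquiv v = B v := rfl
    rw [this, hBapp]


lemma mono_Phi (g : Fin m → E) (b : Fin m → ℝ) (hc : IsCompact (Pset g b)) {x y : E}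
    (hx : x ∈ interior (Pset g b)) (hy : y ∈ interior (Pset g b)) (hxy : x ≠ y) :
    0 < ⟪Phi g b y - Phi g b x, y - x⟫ := by
  classical
  set v := y - x with hv
  have hvne : v ≠ 0 := sub_ne_zero.mpr (Ne.symm hxy)
  obtain ⟨i₀, hi₀⟩ : ∃ i, ⟪g i, v⟫ ≠ 0 := by
    by_contra hcon
    push_neg at hcon
    exact no_ray g b hc (interior_subset hx) hvne hcon
  set h : ℝ → ℝ := fun t => ∑ i, ⟪g i, v⟫ * Real.log ((⟪g i, x⟫ + b i) + t * ⟪g i, v⟫) with hh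
  have hseg : ∀ t : ℝ, t ∈ Set.Icc (0:ℝ) 1 → x + t • v ∈ interior (Pset g b) := by
    intro t ht
    have := (convex_Pset g b).interior hx hy (by linarith [ht.1, ht.2] : (0:ℝ) ≤ 1 - t) ht.1
      (by ring)
    have heq : (1 - t) • x + t • y = x + t • v := by
      rw [hv]; rw [smul_sub, sub_smul, one_smul]; abel
    rwa [heq] at this
  have hpos : ∀ t : ℝ, t ∈ Set.Icc (0:ℝ) 1 → ∀ i, g i ≠ 0 →
      0 < (⟪g i, x⟫ + b i) + t * ⟪g i, v⟫ := by
    intro t ht i hgi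
    have := int_pos g b (hseg t ht) i hgi
    rwa [f_affine] at this
  have hD : ∀ t ∈ Set.Icc (0:ℝ) 1,
      HasDerivAt h (∑ i, (⟪g i, v⟫)^2 / ((⟪g i, x⟫ + b i) + t * ⟪g i, v⟫)) t := by
    intro t ht
    apply HasDerivAt.fun_sum
    intro i _
    by_cases hai : (⟪g i, v⟫:ℝ) = 0
    · have : (fun t:ℝ => ⟪g i, v⟫ * Real.log ((⟪g i, x⟫ + b i) + t * ⟪g i, v⟫))
          = fun _ => (0:ℝ) := by
        funext s; rw [hai]; ring
      rw [this, hai]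
      simpa using hasDerivAt_const t (0:ℝ)
    · have hgi : g i ≠ 0 := by
        intro h0; apply hai; rw [h0, inner_zero_left]
      have hfpos := hpos t ht i hgi
      have haff : HasDerivAt (fun s:ℝ => (⟪g i, x⟫ + b i) + s * ⟪g i, v⟫) ⟪g i, v⟫ t := by
        simpa using ((hasDerivAt_id t).mul_const (⟪g i, v⟫:ℝ)).const_add (⟪g i, x⟫ + b i)
      have hlog := (haff.log (ne_of_gt hfpos)).const_mul (⟪g i, v⟫:ℝ)
      convert hlog using 1
      · rfl
      ring
  have hmono : StrictMonoOn h (Set.Icc (0:ℝ) 1) := by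
    apply strictMonoOn_of_deriv_pos (convex_Icc 0 1)
    · intro t ht
      exact (hD t ht).continuousAt.continuousWithinAt
    · intro t ht
      rw [interior_Icc] at ht
      rw [(hD t (Set.mem_Icc_of_Ioo ht)).deriv]
      have hterm : ∀ i ∈ Finset.univ, (0:ℝ) ≤ (⟪g i, v⟫)^2 / ((⟪g i, x⟫ + b i) + t * ⟪g i, v⟫) := by
        intro i _
        by_cases hgi : g i = 0
        · rw [hgi, inner_zero_left]; simp
        · exact div_nonneg (sq_nonneg _) (le_of_lt (hpos t (Set.mem_Icc_of_Ioo ht) i hgi))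
      have hi₀pos : 0 < (⟪g i₀, v⟫)^2 / ((⟪g i₀, x⟫ + b i₀) + t * ⟪g i₀, v⟫) := by
        have hgi₀ : g i₀ ≠ 0 := by
          intro h0; apply hi₀; rw [h0, inner_zero_left]
        exact div_pos (by positivity) (hpos t (Set.mem_Icc_of_Ioo ht) i₀ hgi₀)
      calc (0:ℝ) < (⟪g i₀, v⟫)^2 / ((⟪g i₀, x⟫ + b i₀) + t * ⟪g i₀, v⟫) := hi₀pos
        _ ≤ ∑ i, (⟪g i, v⟫)^2 / ((⟪g i, x⟫ + b i) + t * ⟪g i, v⟫) :=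
          Finset.single_le_sum hterm (Finset.mem_univ i₀)
  have hlt : h 0 < h 1 := hmono (Set.left_mem_Icc.mpr zero_le_one)
    (Set.right_mem_Icc.mpr zero_le_one) zero_lt_one
  have hinner : ∀ z : E, ⟪Phi g b z, v⟫ = ∑ i, ⟪g i, v⟫ * Real.log (⟪g i, z⟫ + b i) := by
    intro z
    rw [Phi, sum_inner]
    refine Finset.sum_congr rfl fun i _ => ?_
    rw [real_inner_smul_left]; ring
  have h0eq : h 0 = ⟪Phi g b x, v⟫ := by
    rw [hinner, hh]
    refine Finset.sum_congr rfl fun i _ => ?_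
    norm_num
  have h1eq : h 1 = ⟪Phi g b y, v⟫ := by
    rw [hinner, hh]
    refine Finset.sum_congr rfl fun i _ => ?_
    have : ⟪g i, y⟫ + b i = (⟪g i, x⟫ + b i) + 1 * ⟪g i, v⟫ := by
      rw [hv, inner_sub_right]; ring
    rw [this]
  rw [inner_sub_left]
  rw [← h1eq, ← h0eq]
  linarith

lemma inj_Phi (g : Fin m → E) (b : Fin m → ℝ) (hc : IsCompact (Pset g b)) :
    Set.InjOn (Phi g b) (interior (Pset g b)) := by
  intro x hx y hy hPhi
  by_contra hxy
  have := mono_Phi g b hc hx hy hxy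
  rw [hPhi, sub_self, inner_zero_left] at this
  exact lt_irrefl 0 this


lemma surj_Phi (g : Fin m → E) (b : Fin m → ℝ) (hc : IsCompact (Pset g b))
    (hPint : (interior (Pset g b)).Nonempty) (p : E) :
    ∃ x ∈ interior (Pset g b), Phi g b x = p := by
  classical
  obtain ⟨x₀, hx₀⟩ := hPint
  set φ : ℝ → ℝ := fun s => s * Real.log s - s with hφ
  set G : EuclideanSpace ℝ (Fin n) → ℝ := fun x => ⟪p, x⟫ - ∑ i, φ (⟪g i, x⟫ + b i) with hG
  have hGcont : Continuous G := by
    apply Continuous.sub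
    · exact continuous_const.inner continuous_id
    · apply continuous_finset_sum
      intro i _
      have hfi : Continuous fun x : EuclideanSpace ℝ (Fin n) => ⟪g i, x⟫ + b i :=
        (continuous_const.inner continuous_id).add continuous_const
      exact (Real.continuous_mul_log.comp hfi).sub hfi
  obtain ⟨xb, hxbP, hmax⟩ := hc.exists_isMaxOn ⟨x₀, interior_subset hx₀⟩ hGcont.continuousOn
  have hmax' : ∀ z ∈ Pset g b, G z ≤ G xb := hmax
  -- the maximizer is interior
  have hxbint : xb ∈ interior (Pset g b) := by
    by_contra hni
    have hfr : xb ∈ frontier (Pset g b) := by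
      rw [(isClosed_Pset g b).frontier_eq]; exact ⟨hxbP, hni⟩
    obtain ⟨-, i₀, hgi₀, hbi₀⟩ := frontier_binding g b ⟨x₀, interior_subset hx₀⟩ hfr
    set u := x₀ - xb with hu
    set A : Finset (Fin m) := Finset.univ.filter (fun i => ⟪g i, xb⟫ + b i = 0 ∧ g i ≠ 0) with hA
    have hiA : i₀ ∈ A := by
      rw [hA, Finset.mem_filter]; exact ⟨Finset.mem_univ _, hbi₀, hgi₀⟩
    have hmi : ∀ i, ⟪g i, u⟫ = (⟪g i, x₀⟫ + b i) - (⟪g i, xb⟫ + b i) := by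
      intro i; rw [hu, inner_sub_right]; ring
    have heA : ∀ i ∈ A, 0 < ⟪g i, x₀⟫ + b i := by
      intro i hi
      rw [hA, Finset.mem_filter] at hi
      exact int_pos g b hx₀ i hi.2.2
    set SA : ℝ := ∑ i ∈ A, (⟪g i, x₀⟫ + b i) with hSA
    have hSApos : 0 < SA := Finset.sum_pos heA ⟨i₀, hiA⟩
    set B0 : ℝ := ∑ i ∈ A, ((⟪g i, x₀⟫ + b i) * Real.log (⟪g i, x₀⟫ + b i) - (⟪g i, x₀⟫ + b i))
        + ∑ i ∈ Finset.univ.filter (fun i => ¬(⟪g i, xb⟫ + b i = 0 ∧ g i ≠ 0)),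
          (φ (⟪g i, x₀⟫ + b i) - φ (⟪g i, xb⟫ + b i)) with hB0
    have hkey : ∀ t : ℝ, 0 < t → t < 1 → ⟪p, u⟫ ≤ SA * Real.log t + B0 := by
      intro t ht0 ht1
      have hmem : xb + t • u ∈ Pset g b := by
        have := convex_Pset g b hxbP (interior_subset hx₀)
          (by linarith : (0:ℝ) ≤ 1 - t) (le_of_lt ht0) (by ring)
        have heq : (1 - t) • xb + t • x₀ = xb + t • u := by
          rw [hu, smul_sub, sub_smul, one_smul]; abel
        rwa [heq] at this
      have hGle := hmax' _ hmem
      rw [hG] at hGle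
      simp only at hGle
      have hexp : ⟪p, xb + t • u⟫ = ⟪p, xb⟫ + t * ⟪p, u⟫ := by
        rw [inner_add_right, real_inner_smul_right]
      rw [hexp] at hGle
      have hsum : t * ⟪p, u⟫ ≤
          ∑ i, (φ ((⟪g i, xb + t • u⟫ + b i)) - φ (⟪g i, xb⟫ + b i)) := by
        rw [Finset.sum_sub_distrib]
        linarith
      -- rewrite each argument
      have harg : ∀ i, ⟪g i, xb + t • u⟫ + b i
          = (1 - t) * (⟪g i, xb⟫ + b i) + t * (⟪g i, x₀⟫ + b i) := by
        intro i
        rw [f_affine, hmi i]; ring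
      rw [Finset.sum_congr rfl (fun i _ => by rw [harg i])] at hsum
      -- split the sum
      rw [← Finset.sum_filter_add_sum_filter_not Finset.univ
        (fun i => ⟪g i, xb⟫ + b i = 0 ∧ g i ≠ 0)] at hsum
      -- active part
      have hact : ∀ i ∈ A,
          φ ((1 - t) * (⟪g i, xb⟫ + b i) + t * (⟪g i, x₀⟫ + b i)) - φ (⟪g i, xb⟫ + b i)
          = t * (⟪g i, x₀⟫ + b i) * Real.log t
            + t * ((⟪g i, x₀⟫ + b i) * Real.log (⟪g i, x₀⟫ + b i) - (⟪g i, x₀⟫ + b i)) := by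
        intro i hi
        rw [hA, Finset.mem_filter] at hi
        obtain ⟨-, hzero, hgi⟩ := hi
        rw [hzero, hφ]
        simp only [mul_zero, add_zero, zero_mul, Real.log_zero, mul_zero, sub_zero, zero_sub]
        have hepos : 0 < ⟪g i, x₀⟫ + b i := int_pos g b hx₀ i hgi
        rw [zero_add, Real.log_mul (ne_of_gt ht0) (ne_of_gt hepos)]
        ring
      -- inactive part: convexity bound
      have hinact : ∀ i, φ ((1 - t) * (⟪g i, xb⟫ + b i) + t * (⟪g i, x₀⟫ + b i))
          - φ (⟪g i, xb⟫ + b i) ≤ t * (φ (⟪g i, x₀⟫ + b i) - φ (⟪g i, xb⟫ + b i)) := by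
        intro i
        have hc0 : (0:ℝ) ≤ ⟪g i, xb⟫ + b i := hxbP i
        have he0 : (0:ℝ) ≤ ⟪g i, x₀⟫ + b i := interior_subset hx₀ i
        have hcvx := Real.convexOn_mul_log.2 (Set.mem_Ici.mpr hc0) (Set.mem_Ici.mpr he0)
          (by linarith : (0:ℝ) ≤ 1 - t) (le_of_lt ht0) (by ring)
        simp only [smul_eq_mul] at hcvx
        rw [hφ]
        simp only
        nlinarith [hcvx]
      have hsum2 : t * ⟪p, u⟫ ≤
          (∑ i ∈ A, (t * (⟪g i, x₀⟫ + b i) * Real.log t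
            + t * ((⟪g i, x₀⟫ + b i) * Real.log (⟪g i, x₀⟫ + b i) - (⟪g i, x₀⟫ + b i))))
          + ∑ i ∈ Finset.univ.filter (fun i => ¬(⟪g i, xb⟫ + b i = 0 ∧ g i ≠ 0)),
              t * (φ (⟪g i, x₀⟫ + b i) - φ (⟪g i, xb⟫ + b i)) := by
        refine le_trans hsum (add_le_add ?_ ?_)
        · exact le_of_eq (Finset.sum_congr rfl hact)
        · exact Finset.sum_le_sum (fun i _ => hinact i)
      have hfinal : t * ⟪p, u⟫ ≤ t * (SA * Real.log t + B0) := by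
        refine le_trans hsum2 (le_of_eq ?_)
        have e1 : ∑ i ∈ A, (t * (⟪g i, x₀⟫ + b i) * Real.log t
            + t * ((⟪g i, x₀⟫ + b i) * Real.log (⟪g i, x₀⟫ + b i) - (⟪g i, x₀⟫ + b i)))
            = t * ((∑ i ∈ A, (⟪g i, x₀⟫ + b i)) * Real.log t)
              + t * ∑ i ∈ A, ((⟪g i, x₀⟫ + b i) * Real.log (⟪g i, x₀⟫ + b i)
                - (⟪g i, x₀⟫ + b i)) := by
          rw [Finset.sum_add_distrib]
          congr 1
          · rw [Finset.sum_mul, Finset.mul_sum]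
            exact Finset.sum_congr rfl fun i _ => by ring
          · rw [Finset.mul_sum]
        have e2 : ∑ i ∈ Finset.univ.filter (fun i => ¬(⟪g i, xb⟫ + b i = 0 ∧ g i ≠ 0)),
            t * (φ (⟪g i, x₀⟫ + b i) - φ (⟪g i, xb⟫ + b i))
            = t * ∑ i ∈ Finset.univ.filter (fun i => ¬(⟪g i, xb⟫ + b i = 0 ∧ g i ≠ 0)),
              (φ (⟪g i, x₀⟫ + b i) - φ (⟪g i, xb⟫ + b i)) := by
          rw [Finset.mul_sum]
        rw [e1, e2, hSA, hB0]
        ring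
      exact le_of_mul_le_mul_left (by linarith [hfinal]) ht0
    -- choose t small to get a contradiction
    set θ : ℝ := (⟪p, u⟫ - B0 - 1) / SA with hθ
    set t₀ : ℝ := min (1/2) (Real.exp θ) with ht₀
    have ht₀pos : 0 < t₀ := lt_min (by norm_num) (Real.exp_pos θ)
    have ht₀lt : t₀ < 1 := lt_of_le_of_lt (min_le_left _ _) (by norm_num)
    have hlogt₀ : Real.log t₀ ≤ θ := by
      calc Real.log t₀ ≤ Real.log (Real.exp θ) :=
        Real.log_le_log ht₀pos (min_le_right _ _)
      _ = θ := Real.log_exp θ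
    have := hkey t₀ ht₀pos ht₀lt
    have hSAlog : SA * Real.log t₀ ≤ SA * θ := mul_le_mul_of_nonneg_left hlogt₀ (le_of_lt hSApos)
    have hSAθ : SA * θ = ⟪p, u⟫ - B0 - 1 := by
      rw [hθ, mul_div_cancel₀ _ (ne_of_gt hSApos)]
    linarith
  -- at an interior max the derivative vanishes
  refine ⟨xb, hxbint, ?_⟩
  have hgrad : ∀ w : EuclideanSpace ℝ (Fin n), ⟪p - Phi g b xb, w⟫ = 0 := by
    intro w
    set ψ : ℝ → ℝ := fun t => ⟪p, xb⟫ + t * ⟪p, w⟫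
      - ∑ i, φ ((⟪g i, xb⟫ + b i) + t * ⟪g i, w⟫) with hψ
    have hψG : ∀ t : ℝ, ψ t = G (xb + t • w) := by
      intro t
      rw [hψ, hG]
      simp only
      rw [inner_add_right, real_inner_smul_right]
      congr 1
      refine Finset.sum_congr rfl fun i _ => ?_
      rw [f_affine]
    have hloc : IsLocalMax ψ 0 := by
      have hcont : Continuous fun t : ℝ => xb + t • w :=
        continuous_const.add (continuous_id.smul continuous_const)
      have hV : (fun t : ℝ => xb + t • w) ⁻¹' interior (Pset g b) ∈ nhds (0:ℝ) := by
        apply hcont.continuousAt.preimage_mem_nhds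
        rw [show xb + (0:ℝ) • w = xb by simp]
        exact isOpen_interior.mem_nhds hxbint
      refine Filter.eventually_of_mem hV (fun t ht => ?_)
      rw [hψG, hψG]
      simp only [zero_smul, add_zero]
      exact hmax' _ (interior_subset ht)
    have hder : HasDerivAt ψ (⟪p, w⟫ - ∑ i, ⟪g i, w⟫ * Real.log (⟪g i, xb⟫ + b i)) 0 := by
      apply HasDerivAt.sub
      · simpa using ((hasDerivAt_id (0:ℝ)).mul_const (⟪p, w⟫:ℝ)).const_add (⟪p, xb⟫:ℝ)
      · apply HasDerivAt.fun_sum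
        intro i _
        by_cases hai : (⟪g i, w⟫:ℝ) = 0
        · have : (fun t:ℝ => φ ((⟪g i, xb⟫ + b i) + t * ⟪g i, w⟫))
              = fun _ => φ (⟪g i, xb⟫ + b i) := by
            funext s; rw [hai]; ring_nf
          rw [this, hai]
          simpa using hasDerivAt_const (0:ℝ) (φ (⟪g i, xb⟫ + b i))
        · have hgi : g i ≠ 0 := fun h0 => hai (by rw [h0, inner_zero_left])
          have hfpos : 0 < ⟪g i, xb⟫ + b i := int_pos g b hxbint i hgi
          have haff : HasDerivAt (fun t:ℝ => (⟪g i, xb⟫ + b i) + t * ⟪g i, w⟫) ⟪g i, w⟫ 0 := by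
            simpa using ((hasDerivAt_id (0:ℝ)).mul_const (⟪g i, w⟫:ℝ)).const_add
              (⟪g i, xb⟫ + b i)
          have hne : (⟪g i, xb⟫ + b i) + 0 * ⟪g i, w⟫ ≠ 0 := by
            rw [zero_mul, add_zero]; exact ne_of_gt hfpos
          have hml := (Real.hasDerivAt_mul_log hne).comp 0 haff
          have htot := hml.fun_sub haff
          have : φ ∘ (fun t:ℝ => (⟪g i, xb⟫ + b i) + t * ⟪g i, w⟫)
              = fun t:ℝ => φ ((⟪g i, xb⟫ + b i) + t * ⟪g i, w⟫) := rfl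
          rw [hφ]
          convert htot using 1
          · rfl
          rw [zero_mul, add_zero]
          ring
    have hzero := hloc.hasDerivAt_eq_zero hder
    have hPhiw : ⟪Phi g b xb, w⟫ = ∑ i, ⟪g i, w⟫ * Real.log (⟪g i, xb⟫ + b i) := by
      rw [Phi, sum_inner]
      refine Finset.sum_congr rfl fun i _ => ?_
      rw [real_inner_smul_left]; ring
    rw [inner_sub_left, hPhiw]
    linarith [hzero]
  have := hgrad (p - Phi g b xb)
  rw [inner_self_eq_zero] at this
  rw [sub_eq_zero] at this
  exact this.symm


lemma pair_bound (g : Fin m → E) (b : Fin m → ℝ) (hc : IsCompact (Pset g b))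
    (Nf : EuclideanSpace ℝ (Fin n) → EuclideanSpace ℝ (Fin n) → ℝ)
    (hN : ∀ x ∈ interior (Pset g b), ∀ w : EuclideanSpace ℝ (Fin n), w ≠ 0 →
      ∀ t1 t2 : ℝ, 0 < t1 → 0 < t2 →
        x + t1 • w ∈ frontier (Pset g b) → x - t2 • w ∈ frontier (Pset g b) →
        Nf x w = (1/2) * (1/t1 + 1/t2))
    {z w : EuclideanSpace ℝ (Fin n)} (hz : z ∈ interior (Pset g b)) (hw : w ≠ 0)
    {i j : Fin m} (hgi : g i ≠ 0) (hgj : g j ≠ 0) :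
    1/2 * (⟪g i, w⟫ / (⟪g i, z⟫ + b i) - ⟪g j, w⟫ / (⟪g j, z⟫ + b j)) ≤ Nf z w := by
  obtain ⟨T1, hT1, hfr1⟩ := exit_time g b hc hz hw
  obtain ⟨T2, hT2, hfr2⟩ := exit_time g b hc hz (neg_ne_zero.mpr hw)
  have hfr2' : z - T2 • w ∈ frontier (Pset g b) := by
    rwa [smul_neg, ← sub_eq_add_neg] at hfr2
  have hNval := hN z hz w hw T1 T2 hT1 hT2 hfr1 hfr2'
  have hPz1 : z + T1 • w ∈ Pset g b := (isClosed_Pset g b).frontier_subset hfr1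
  have hPz2 : z - T2 • w ∈ Pset g b := (isClosed_Pset g b).frontier_subset hfr2'
  have hci : 0 < ⟪g i, z⟫ + b i := int_pos g b hz i hgi
  have hcj : 0 < ⟪g j, z⟫ + b j := int_pos g b hz j hgj
  have h1 : ⟪g i, w⟫ / (⟪g i, z⟫ + b i) ≤ 1 / T2 := by
    have hfeas := hPz2 i
    have hexp : ⟪g i, z - T2 • w⟫ + b i = (⟪g i, z⟫ + b i) - T2 * ⟪g i, w⟫ := by
      rw [inner_sub_right, real_inner_smul_right]; ring
    rw [hexp] at hfeas
    rw [div_le_div_iff₀ hci hT2]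
    nlinarith
  have h2 : - (⟪g j, w⟫ / (⟪g j, z⟫ + b j)) ≤ 1 / T1 := by
    have hfeas := hPz1 j
    have hexp : ⟪g j, z + T1 • w⟫ + b j = (⟪g j, z⟫ + b j) + T1 * ⟪g j, w⟫ :=
      f_affine _ _ _ _ _
    rw [hexp] at hfeas
    rw [← neg_div, div_le_div_iff₀ hcj hT1]
    nlinarith
  rw [hNval]
  linarith

end PropAB


open PropAB

/-- Property (A) implies property (B): if `‖dΦₓ(v)‖ ≥ C‖v‖ₓ` (Hilbert Finsler norm) and `Φ`
is Lipschitz from `(int P, d)` to Euclidean space, then (using completeness of `(int P, d)`)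
`Φ` is onto `ℝⁿ`, injective on `int P`, and bilipschitz, with `Φ⁻¹` Lipschitz constant `1/C`. -/
theorem property_A_implies_B {n m : ℕ}
    (g : Fin m → EuclideanSpace ℝ (Fin n)) (b : Fin m → ℝ)
    (P : Set (EuclideanSpace ℝ (Fin n)))
    (hP : P = {x | ∀ i, 0 ≤ ⟪g i, x⟫ + b i})
    (hPcomp : IsCompact P) (hPint : (interior P).Nonempty)
    (d : EuclideanSpace ℝ (Fin n) → EuclideanSpace ℝ (Fin n) → ℝ)
    (hd0 : ∀ x, d x x = 0)
    (hd : ∀ x y, x ∈ interior P → y ∈ interior P → x ≠ y →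
      ∀ a1 a2 : EuclideanSpace ℝ (Fin n), a1 ∈ frontier P → a2 ∈ frontier P →
      (∃ t1 t2 : ℝ, t1 < 0 ∧ 1 < t2 ∧ a1 = x + t1 • (y - x) ∧ a2 = x + t2 • (y - x)) →
      d x y = (1/2) * Real.log ((‖y - a1‖ / ‖x - a1‖) * (‖x - a2‖ / ‖y - a2‖)))
    -- completeness of the metric space (int P, d)
    (hcomplete : ∀ u : ℕ → EuclideanSpace ℝ (Fin n), (∀ k, u k ∈ interior P) →
      (∀ ε > 0, ∃ N : ℕ, ∀ p ≥ N, ∀ q ≥ N, d (u p) (u q) < ε) →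
      ∃ x ∈ interior P, ∀ ε > 0, ∃ N : ℕ, ∀ k ≥ N, d (u k) x < ε)
    -- the Hilbert Finsler norm
    (N : EuclideanSpace ℝ (Fin n) → EuclideanSpace ℝ (Fin n) → ℝ)
    (hN0 : ∀ x, N x 0 = 0)
    (hN : ∀ x ∈ interior P, ∀ w : EuclideanSpace ℝ (Fin n), w ≠ 0 →
      ∀ t1 t2 : ℝ, 0 < t1 → 0 < t2 →
        x + t1 • w ∈ frontier P → x - t2 • w ∈ frontier P →
        N x w = (1/2) * (1/t1 + 1/t2))
    (Φ : EuclideanSpace ℝ (Fin n) → EuclideanSpace ℝ (Fin n))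
    (hΦ : ∀ x, Φ x = ∑ i, Real.log (⟪g i, x⟫ + b i) • g i)
    -- Φ is Lipschitz from (int P, d) to ℝⁿ
    (L : ℝ) (hL : 0 < L)
    (hLip : ∀ x ∈ interior P, ∀ y ∈ interior P, ‖Φ x - Φ y‖ ≤ L * d x y)
    -- property (A)
    (C : ℝ) (hC : 0 < C)
    (hA : ∀ x ∈ interior P, ∀ v : EuclideanSpace ℝ (Fin n),
      C * N x v ≤ ‖∑ i, ((⟪g i, v⟫ / (⟪g i, x⟫ + b i)) • g i)‖) :
    Φ '' interior P = Set.univ ∧ Set.InjOn Φ (interior P) ∧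
      ∀ x ∈ interior P, ∀ y ∈ interior P, C * d x y ≤ ‖Φ x - Φ y‖ := by
  have hPs : P = Pset g b := hP
  subst hPs
  have hΦfun : Φ = Phi g b := funext hΦ
  subst hΦfun
  have hsurj : ∀ p : EuclideanSpace ℝ (Fin n),
      ∃ x ∈ interior (Pset g b), Phi g b x = p := surj_Phi g b hPcomp hPint
  have hinj : Set.InjOn (Phi g b) (interior (Pset g b)) := inj_Phi g b hPcomp
  refine ⟨?_, hinj, ?_⟩
  · apply Set.eq_univ_of_forall
    intro p
    obtain ⟨x, hx, hxp⟩ := hsurj p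
    exact ⟨x, hx, hxp⟩
  · intro x hx y hy
    by_cases hxy : x = y
    · subst hxy
      rw [hd0]
      simp
    -- nontrivial case
    set p : EuclideanSpace ℝ (Fin n) := Phi g b x with hp
    set q : EuclideanSpace ℝ (Fin n) := Phi g b y with hq
    have hqp : q - p ≠ 0 := by
      rw [sub_ne_zero]
      intro h
      exact hxy (hinj hy hx h).symm
    -- global inverse
    set Ψ : EuclideanSpace ℝ (Fin n) → EuclideanSpace ℝ (Fin n) :=
      fun r => (hsurj r).choose with hΨ
    have hΨint : ∀ r, Ψ r ∈ interior (Pset g b) := fun r => (hsurj r).choose_spec.1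
    have hΨPhi : ∀ r, Phi g b (Ψ r) = r := fun r => (hsurj r).choose_spec.2
    have hΨuniq : ∀ z ∈ interior (Pset g b), Ψ (Phi g b z) = z :=
      fun z hz => hinj (hΨint _) hz (hΨPhi _)
    set ℓ : ℝ → EuclideanSpace ℝ (Fin n) := fun s => p + s • (q - p) with hℓ
    set σ : ℝ → EuclideanSpace ℝ (Fin n) := fun s => Ψ (ℓ s) with hσ
    have hσint : ∀ s, σ s ∈ interior (Pset g b) := fun s => hΨint _
    have hσPhi : ∀ s, Phi g b (σ s) = ℓ s := fun s => hΨPhi _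
    have hσ0 : σ 0 = x := by
      have h00 : ℓ 0 = p := by rw [hℓ]; simp
      show Ψ (ℓ 0) = x
      rw [h00]
      exact hΨuniq x hx
    have hσ1 : σ 1 = y := by
      have h11 : ℓ 1 = q := by rw [hℓ]; simp
      show Ψ (ℓ 1) = y
      rw [h11]
      exact hΨuniq y hy
    -- derivative of σ
    have hσderiv : ∀ s : ℝ, ∃ v : EuclideanSpace ℝ (Fin n), HasDerivAt σ v s ∧ v ≠ 0 ∧
        (∑ i, ((⟪g i, v⟫ / (⟪g i, σ s⟫ + b i)) • g i)) = q - p := by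
      intro s
      obtain ⟨e, he, heapp⟩ := deriv_package g b hPcomp (hσint s)
      set linv := he.localInverse (Phi g b) e (σ s) with hlinv
      have h1 : ∀ᶠ r in nhds (ℓ s), Phi g b (linv r) = r := by
        have := he.eventually_right_inverse
        rwa [hσPhi s] at this
      have h2 : ∀ᶠ r in nhds (ℓ s), linv r ∈ interior (Pset g b) := by
        have hcont := he.localInverse_continuousAt
        have htend : Filter.Tendsto linv (nhds (Phi g b (σ s))) (nhds (σ s)) := by
          have happ := he.localInverse_apply_image
          rw [ContinuousAt, happ] at hcont
          exact hcont
        rw [hσPhi s] at htend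
        exact htend.eventually (isOpen_interior.eventually_mem (hσint s))
      have hev : Ψ =ᶠ[nhds (ℓ s)] linv := by
        filter_upwards [h1, h2] with r hr1 hr2
        exact hinj (hΨint r) hr2 ((hΨPhi r).trans hr1.symm)
      have hinvder : HasFDerivAt Ψ (e.symm :
          EuclideanSpace ℝ (Fin n) →L[ℝ] EuclideanSpace ℝ (Fin n)) (ℓ s) := by
        have h3 := he.to_localInverse.hasFDerivAt
        rw [hσPhi s] at h3
        exact h3.congr_of_eventuallyEq hev
      have hℓder : HasDerivAt ℓ (q - p) s := by
        have := ((hasDerivAt_id s).smul_const (q - p)).const_add p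
        simpa [hℓ] using this
      have hcomp : HasDerivAt σ (e.symm (q - p)) s := by
        have := hinvder.comp_hasDerivAt s hℓder
        exact this
      refine ⟨e.symm (q - p), hcomp, ?_, ?_⟩
      · intro h0
        apply hqp
        have := congrArg e h0
        rwa [e.apply_symm_apply, map_zero] at this
      · rw [← heapp]
        exact e.apply_symm_apply (q - p)
    -- the cross-ratio formula for d x y
    have hvne : y - x ≠ 0 := sub_ne_zero.mpr (Ne.symm hxy)
    obtain ⟨T1, hT1, hfrA2⟩ := exit_time g b hPcomp hy hvne
    obtain ⟨T2, hT2, hfrA1⟩ := exit_time g b hPcomp hx (neg_ne_zero.mpr hvne)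
    set a1 : EuclideanSpace ℝ (Fin n) := x + (-T2) • (y - x) with ha1
    set a2 : EuclideanSpace ℝ (Fin n) := x + (1 + T1) • (y - x) with ha2
    have ha1' : a1 ∈ frontier (Pset g b) := by
      have : x + T2 • -(y - x) = a1 := by rw [ha1, smul_neg, neg_smul, ← sub_eq_add_neg]
      rwa [this] at hfrA1
    have ha2' : a2 ∈ frontier (Pset g b) := by
      have : y + T1 • (y - x) = a2 := by
        rw [ha2, add_smul, one_smul]
        rw [show x + (y - x + T1 • (y - x)) = y + T1 • (y - x) by abel]
      rwa [this] at hfrA2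
    have hdxy := hd x y hx hy hxy a1 a2 ha1' ha2'
      ⟨-T2, 1 + T1, by linarith, by linarith, rfl, rfl⟩
    have hvnorm : (0:ℝ) < ‖y - x‖ := norm_pos_iff.mpr hvne
    -- norms
    have hn1 : ‖y - a1‖ = (1 + T2) * ‖y - x‖ := by
      have : y - a1 = (1 + T2) • (y - x) := by
        rw [ha1, neg_smul, ← sub_eq_add_neg, add_smul, one_smul]
        abel
      rw [this, norm_smul, Real.norm_eq_abs, abs_of_pos (by linarith)]
    have hn2 : ‖x - a1‖ = T2 * ‖y - x‖ := by
      have : x - a1 = T2 • (y - x) := by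
        rw [ha1, neg_smul, ← sub_eq_add_neg]
        abel
      rw [this, norm_smul, Real.norm_eq_abs, abs_of_pos hT2]
    have hn3 : ‖x - a2‖ = (1 + T1) * ‖y - x‖ := by
      have : x - a2 = -((1 + T1) • (y - x)) := by rw [ha2]; abel
      rw [this, norm_neg, norm_smul, Real.norm_eq_abs, abs_of_pos (by linarith)]
    have hn4 : ‖y - a2‖ = T1 * ‖y - x‖ := by
      have : y - a2 = -(T1 • (y - x)) := by
        rw [ha2, add_smul, one_smul]
        abel
      rw [this, norm_neg, norm_smul, Real.norm_eq_abs, abs_of_pos hT1]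
    rw [hn1, hn2, hn3, hn4] at hdxy
    have hratio1 : (1 + T2) * ‖y - x‖ / (T2 * ‖y - x‖) = (1 + T2) / T2 :=
      mul_div_mul_right _ _ (ne_of_gt hvnorm)
    have hratio2 : (1 + T1) * ‖y - x‖ / (T1 * ‖y - x‖) = (1 + T1) / T1 :=
      mul_div_mul_right _ _ (ne_of_gt hvnorm)
    rw [hratio1, hratio2] at hdxy
    -- binding indices
    have hPne : (Pset g b).Nonempty := ⟨x, interior_subset hx⟩
    obtain ⟨ha1P, k, hgk, hfk0⟩ := frontier_binding g b hPne ha1'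
    obtain ⟨ha2P, l, hgl, hfl0⟩ := frontier_binding g b hPne ha2'
    have hckx : 0 < ⟪g k, x⟫ + b k := int_pos g b hx k hgk
    have hcky : 0 < ⟪g k, y⟫ + b k := int_pos g b hy k hgk
    have hclx : 0 < ⟪g l, x⟫ + b l := int_pos g b hx l hgl
    have hcly : 0 < ⟪g l, y⟫ + b l := int_pos g b hy l hgl
    have hinnerk : ⟪g k, y⟫ + b k = (⟪g k, x⟫ + b k) + ⟪g k, y - x⟫ := by
      rw [inner_sub_right]; ring
    have hinnerl : ⟪g l, y⟫ + b l = (⟪g l, x⟫ + b l) + ⟪g l, y - x⟫ := by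
      rw [inner_sub_right]; ring
    have hfk0' : (⟪g k, x⟫ + b k) + (-T2) * ⟪g k, y - x⟫ = 0 := by
      rw [← f_affine]
      exact hfk0
    have hfl0' : (⟪g l, x⟫ + b l) + (1 + T1) * ⟪g l, y - x⟫ = 0 := by
      rw [← f_affine]
      exact hfl0
    -- ratio identities
    have hr1 : (1 + T2) / T2 = (⟪g k, y⟫ + b k) / (⟪g k, x⟫ + b k) := by
      rw [div_eq_div_iff (ne_of_gt hT2) (ne_of_gt hckx), hinnerk]
      linear_combination hfk0'
    have hr2 : (1 + T1) / T1 = (⟪g l, x⟫ + b l) / (⟪g l, y⟫ + b l) := by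
      rw [div_eq_div_iff (ne_of_gt hT1) (ne_of_gt hcly), hinnerl]
      linear_combination hfl0'
    rw [hr1, hr2] at hdxy
    have hlogd : d x y = (1/2) * ((Real.log (⟪g k, y⟫ + b k) - Real.log (⟪g k, x⟫ + b k))
        + (Real.log (⟪g l, x⟫ + b l) - Real.log (⟪g l, y⟫ + b l))) := by
      rw [hdxy]
      rw [Real.log_mul (by positivity) (by positivity)]
      rw [Real.log_div (ne_of_gt hcky) (ne_of_gt hckx), Real.log_div (ne_of_gt hclx)
        (ne_of_gt hcly)]
    -- the interpolating function
    choose vf hvder hvne0 hvsum using hσderiv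
    set mf : ℝ → ℝ := fun s => (1/2) * (Real.log (⟪g k, σ s⟫ + b k)
      - Real.log (⟪g l, σ s⟫ + b l)) with hmf
    set K : ℝ := ‖q - p‖ / C with hK
    have hmvt : ‖mf 1 - mf 0‖ ≤ K := by
      apply norm_image_sub_le_of_norm_deriv_le_segment_01'
        (f' := fun s => (1/2) * (⟪g k, vf s⟫ / (⟪g k, σ s⟫ + b k)
          - ⟪g l, vf s⟫ / (⟪g l, σ s⟫ + b l)))
      · intro s _
        have hkpos : 0 < ⟪g k, σ s⟫ + b k := int_pos g b (hσint s) k hgk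
        have hlpos : 0 < ⟪g l, σ s⟫ + b l := int_pos g b (hσint s) l hgl
        have hk1 : HasDerivAt (fun s => ⟪g k, σ s⟫ + b k) ⟪g k, vf s⟫ s := by
          have := ((innerSL ℝ (g k)).hasFDerivAt.comp_hasDerivAt s (hvder s)).add_const (b k)
          simpa using this
        have hl1 : HasDerivAt (fun s => ⟪g l, σ s⟫ + b l) ⟪g l, vf s⟫ s := by
          have := ((innerSL ℝ (g l)).hasFDerivAt.comp_hasDerivAt s (hvder s)).add_const (b l)
          simpa using this
        have hk2 := hk1.log (ne_of_gt hkpos)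
        have hl2 := hl1.log (ne_of_gt hlpos)
        exact ((hk2.sub hl2).const_mul (1/2 : ℝ)).hasDerivWithinAt
      · intro s _
        have hNb := hA (σ s) (hσint s) (vf s)
        rw [hvsum s] at hNb
        have hNK : N (σ s) (vf s) ≤ K := by
          rw [hK, le_div_iff₀ hC]
          linarith [hNb]
        have hb1 := pair_bound g b hPcomp N hN (hσint s) (hvne0 s) hgk hgl
        have hb2 := pair_bound g b hPcomp N hN (hσint s) (hvne0 s) hgl hgk
        rw [Real.norm_eq_abs, abs_le]
        constructor
        · linarith [hb2, hNK]
        · linarith [hb1, hNK]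
    have hd_eq : d x y = mf 1 - mf 0 := by
      rw [hlogd, hmf]
      simp only
      rw [hσ0, hσ1]
      ring
    have hKnn : 0 ≤ K := by
      rw [hK]
      positivity
    have hdK : d x y ≤ K := by
      rw [hd_eq]
      calc mf 1 - mf 0 ≤ |mf 1 - mf 0| := le_abs_self _
        _ = ‖mf 1 - mf 0‖ := (Real.norm_eq_abs _).symm
        _ ≤ K := hmvt
    have : C * d x y ≤ C * K := mul_le_mul_of_nonneg_left hdK (le_of_lt hC)
    rw [hK, mul_div_cancel₀ _ (ne_of_gt hC)] at this
    rw [show ‖Phi g b x - Phi g b y‖ = ‖q - p‖ by rw [hp, hq, norm_sub_rev]]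
    exact this
end

section
/- For a compact convex polytope P = {x : f_i(x) ≥ 0, i=1,…,m}, there exists ε > 0 such that for every x ∈ int P, the intersection ⋂_{i ∈ I_ε(x)} P_i is nonempty, where I_ε(x) = {i : f_i(x) < ε} and P_i = {f_i = 0}. -/
open RealInnerProductSpace

private lemma sum_min_pos {n m : ℕ}
    (g : Fin m → EuclideanSpace ℝ (Fin n)) (b : Fin m → ℝ)
    (P : Set (EuclideanSpace ℝ (Fin n)))
    (hP : P = {x | ∀ i, 0 ≤ ⟪g i, x⟫ + b i})
    (hPcomp : IsCompact P) (hPne : P.Nonempty)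
    (S : Finset (Fin m))
    (hEmpty : ¬ (⋂ i ∈ S, {p : EuclideanSpace ℝ (Fin n) | ⟪g i, p⟫ + b i = 0}).Nonempty) :
    ∃ δ > 0, ∀ x ∈ P, δ ≤ ∑ i ∈ S, (⟪g i, x⟫ + b i) := by
  set f : EuclideanSpace ℝ (Fin n) → ℝ := fun x => ∑ i ∈ S, (⟪g i, x⟫ + b i) with hf
  have hcont : Continuous f := by
    apply continuous_finset_sum
    intro i _
    exact (continuous_const.inner continuous_id).add continuous_const
  obtain ⟨x₀, hx₀P, hmin⟩ := hPcomp.exists_isMinOn hPne hcont.continuousOn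
  have hx₀ : ∀ i, 0 ≤ ⟪g i, x₀⟫ + b i := by rw [hP] at hx₀P; exact hx₀P
  have hnonneg : 0 ≤ f x₀ := Finset.sum_nonneg fun i _ => hx₀ i
  have hpos : 0 < f x₀ := by
    rcases lt_or_eq_of_le hnonneg with h | h
    · exact h
    · exfalso
      apply hEmpty
      refine ⟨x₀, ?_⟩
      simp only [Set.mem_iInter, Set.mem_setOf_eq]
      intro i hi
      have := (Finset.sum_eq_zero_iff_of_nonneg fun i _ => hx₀ i).mp h.symm i hi
      exact this
  exact ⟨f x₀, hpos, fun x hx => hmin hx⟩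

/-- For a compact convex polytope `P = {x : fᵢ(x) ≥ 0}` there is `ε > 0` such that for every
interior point `x`, the hyperplanes `Pᵢ = {fᵢ = 0}` with `fᵢ(x) < ε` have a common point. -/
theorem exists_eps_common_point {n m : ℕ}
    (g : Fin m → EuclideanSpace ℝ (Fin n)) (b : Fin m → ℝ)
    (hg : ∀ i, g i ≠ 0)
    (P : Set (EuclideanSpace ℝ (Fin n)))
    (hP : P = {x | ∀ i, 0 ≤ ⟪g i, x⟫ + b i})
    (hPcomp : IsCompact P) (hPint : (interior P).Nonempty) :
    ∃ ε > 0, ∀ x ∈ interior P,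
      ∃ p : EuclideanSpace ℝ (Fin n), ∀ i, ⟪g i, x⟫ + b i < ε → ⟪g i, p⟫ + b i = 0 := by
  classical
  have hPne : P.Nonempty := hPint.mono interior_subset
  -- choose δ for each subset
  have hδ : ∀ S : Finset (Fin m), ∃ δ > 0,
      (⋂ i ∈ S, {p : EuclideanSpace ℝ (Fin n) | ⟪g i, p⟫ + b i = 0}).Nonempty ∨
      ∀ x ∈ P, δ ≤ ∑ i ∈ S, (⟪g i, x⟫ + b i) := by
    intro S
    by_cases h : (⋂ i ∈ S, {p : EuclideanSpace ℝ (Fin n) | ⟪g i, p⟫ + b i = 0}).Nonempty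
    · exact ⟨1, one_pos, Or.inl h⟩
    · obtain ⟨δ, hδpos, hδ⟩ := sum_min_pos g b P hP hPcomp hPne S h
      exact ⟨δ, hδpos, Or.inr hδ⟩
  choose δ hδpos hδspec using hδ
  set c : ℝ := Finset.univ.inf' ⟨∅, Finset.mem_univ _⟩ δ with hc
  have hcpos : 0 < c := by
    rw [hc]
    apply Finset.lt_inf'_iff _ |>.mpr
    intro S _
    exact hδpos S
  set ε : ℝ := c / (m + 1) with hε
  have hεpos : 0 < ε := div_pos hcpos (by positivity)
  refine ⟨ε, hεpos, ?_⟩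
  intro x hx
  have hxP : x ∈ P := interior_subset hx
  have hxi : ∀ i, 0 ≤ ⟪g i, x⟫ + b i := by rw [hP] at hxP; exact hxP
  set S : Finset (Fin m) := Finset.univ.filter (fun i => ⟪g i, x⟫ + b i < ε) with hS
  rcases hδspec S with hne | hsum
  · obtain ⟨p, hp⟩ := hne
    refine ⟨p, fun i hi => ?_⟩
    have hiS : i ∈ S := Finset.mem_filter.mpr ⟨Finset.mem_univ _, hi⟩
    simp only [Set.mem_iInter, Set.mem_setOf_eq] at hp
    exact hp i hiS
  · -- derive a contradiction
    exfalso
    have hδS := hsum x hxP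
    rcases S.eq_empty_or_nonempty with hSe | hSne
    · rw [hSe] at hδS
      simp at hδS
      linarith [hδpos (∅ : Finset (Fin m))]
    · have hlt : ∑ i ∈ S, (⟪g i, x⟫ + b i) < ∑ i ∈ S, ε := by
        apply Finset.sum_lt_sum_of_nonempty hSne
        intro i hi
        rw [hS] at hi
        exact (Finset.mem_filter.mp hi).2
      rw [Finset.sum_const, nsmul_eq_mul] at hlt
      have hcard : (S.card : ℝ) ≤ m := by exact_mod_cast Finset.card_le_card (Finset.subset_univ S) |>.trans (le_of_eq (Finset.card_univ.trans (Fintype.card_fin m)))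
      have h1 : (S.card : ℝ) * ε ≤ m * ε := mul_le_mul_of_nonneg_right hcard hεpos.le
      have h2 : (m : ℝ) * ε < c := by
        have hmc : ε * (m + 1) = c := div_mul_cancel₀ c (by positivity)
        nlinarith [hεpos]
      have h3 : c ≤ δ S := Finset.inf'_le _ (Finset.mem_univ S)
      linarith
end

section
/- For a polyhedral cone P = {x : f_i(x) ≥ 0} with linear f_i, no line, and nonempty interior, and u := Σ_i ∇f_i: for x₀ ∈ int P, the slice P ∩ (x₀ + u^⊥) is a compact convex polytope of dimension n − 1. -/
open RealInnerProductSpace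

/-- For a polyhedral cone `P = {x : fᵢ(x) ≥ 0}` with linear `fᵢ`, no line and nonempty
interior, with `u = Σᵢ ∇fᵢ` and `x₀ ∈ int P`, the slice `P ∩ (x₀ + u^⊥)` is a compact convex
polytope of dimension `n − 1`. -/
theorem cone_slice_compact_polytope {n m : ℕ}
    (g : Fin m → EuclideanSpace ℝ (Fin n))
    (P : Set (EuclideanSpace ℝ (Fin n)))
    (hP : P = {x | ∀ i, 0 ≤ ⟪g i, x⟫})
    (hnoline : ∀ v : EuclideanSpace ℝ (Fin n), v ∈ P → -v ∈ P → v = 0)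
    (hPint : (interior P).Nonempty)
    (u : EuclideanSpace ℝ (Fin n)) (hu : u = ∑ i, g i)
    (x₀ : EuclideanSpace ℝ (Fin n)) (hx₀ : x₀ ∈ interior P)
    (E : Set (EuclideanSpace ℝ (Fin n))) (hE : E = {y | ⟪u, y - x₀⟫ = 0}) :
    IsCompact (P ∩ E) ∧ Convex ℝ (P ∩ E) ∧
      Module.finrank ℝ (vectorSpan ℝ (P ∩ E)) = n - 1 := by
  have hmemP : ∀ x, x ∈ P ↔ ∀ i, 0 ≤ ⟪g i, x⟫ := by intro x; rw [hP]; rfl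
  have hmemE : ∀ y, y ∈ E ↔ ⟪u, y - x₀⟫ = 0 := by intro y; rw [hE]; rfl
  have hx₀P : x₀ ∈ P := interior_subset hx₀
  have huinner : ∀ x : EuclideanSpace ℝ (Fin n), ⟪u, x⟫ = ∑ i, ⟪g i, x⟫ := by
    intro x; rw [hu, sum_inner]
  have hunn : ∀ x ∈ P, (0:ℝ) ≤ ⟪u, x⟫ := by
    intro x hx
    rw [huinner]
    exact Finset.sum_nonneg fun i _ => (hmemP x).1 hx i
  -- key: on P, ⟪u, x⟫ = 0 forces x = 0
  have hA : ∀ x ∈ P, ⟪u, x⟫ = (0:ℝ) → x = 0 := by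
    intro x hx h0
    have hnn : ∀ i ∈ Finset.univ, (0:ℝ) ≤ ⟪g i, x⟫ := fun i _ => (hmemP x).1 hx i
    rw [huinner] at h0
    have hz := (Finset.sum_eq_zero_iff_of_nonneg hnn).1 h0
    refine hnoline x hx ((hmemP (-x)).2 fun i => ?_)
    rw [inner_neg_right, hz i (Finset.mem_univ i)]
    simp
  -- P is a cone
  have hcone : ∀ (c : ℝ), 0 ≤ c → ∀ x ∈ P, c • x ∈ P := by
    intro c hc x hx
    refine (hmemP _).2 fun i => ?_
    rw [real_inner_smul_right]
    exact mul_nonneg hc ((hmemP x).1 hx i)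
  -- closedness
  have hclosedP : IsClosed P := by
    rw [hP]
    have : {x : EuclideanSpace ℝ (Fin n) | ∀ i, 0 ≤ ⟪g i, x⟫}
        = ⋂ i, {x | 0 ≤ ⟪g i, x⟫} := by ext x; simp
    rw [this]
    exact isClosed_iInter fun i =>
      isClosed_le continuous_const (continuous_const.inner continuous_id)
  have hclosedE : IsClosed E := by
    rw [hE]
    exact isClosed_eq (continuous_const.inner (continuous_id.sub continuous_const))
      continuous_const
  -- positivity bound: ∃ ε > 0, ε‖x‖ ≤ ⟪u,x⟫ on P
  have hpos : ∃ ε > (0:ℝ), ∀ x ∈ P, ε * ‖x‖ ≤ ⟪u, x⟫ := by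
    by_cases hS : (P ∩ Metric.sphere 0 1).Nonempty
    · have hc : IsCompact (P ∩ Metric.sphere 0 1) :=
        ((isCompact_sphere (0 : EuclideanSpace ℝ (Fin n)) 1).inter_left hclosedP)
      obtain ⟨z, hz, hzmin⟩ := hc.exists_isMinOn (f := fun x => (⟪u, x⟫ : ℝ)) hS
        ((continuous_const.inner continuous_id).continuousOn)
      have hz1 : ‖z‖ = 1 := by simpa using hz.2
      have hzpos : (0:ℝ) < ⟪u, z⟫ := by
        rcases (hunn z hz.1).lt_or_eq with h | h
        · exact h
        · exact absurd (hA z hz.1 h.symm) (by intro hz0; rw [hz0] at hz1; simp at hz1)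
      refine ⟨⟪u, z⟫, hzpos, fun x hx => ?_⟩
      rcases eq_or_ne x 0 with rfl | hx0
      · simp
      · have hnx : (0:ℝ) < ‖x‖ := norm_pos_iff.2 hx0
        have hmem : (‖x‖⁻¹) • x ∈ P ∩ Metric.sphere 0 1 := by
          refine ⟨hcone _ (by positivity) x hx, ?_⟩
          simp [norm_smul, abs_of_pos (inv_pos.2 hnx), inv_mul_cancel₀ hnx.ne']
        have := isMinOn_iff.1 hzmin _ hmem
        rw [real_inner_smul_right] at this
        calc ⟪u, z⟫ * ‖x‖ ≤ (‖x‖⁻¹ * ⟪u, x⟫) * ‖x‖ := by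
              exact mul_le_mul_of_nonneg_right this hnx.le
          _ = ⟪u, x⟫ := by field_simp
    · refine ⟨1, one_pos, fun x hx => ?_⟩
      have hx0 : x = 0 := by
        by_contra hx0
        have hnx : (0:ℝ) < ‖x‖ := norm_pos_iff.2 hx0
        exact hS ⟨(‖x‖⁻¹) • x, hcone _ (by positivity) x hx,
          by simp [norm_smul, abs_of_pos (inv_pos.2 hnx), inv_mul_cancel₀ hnx.ne']⟩
      simp [hx0]
  obtain ⟨ε, hε, hεbound⟩ := hpos
  -- boundedness of the slice
  have hbdd : Bornology.IsBounded (P ∩ E) := by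
    refine (Metric.isBounded_iff_subset_closedBall 0).2 ⟨⟪u, x₀⟫ / ε, fun x hx => ?_⟩
    have hxE : ⟪u, x⟫ = ⟪u, x₀⟫ := by
      have := (hmemE x).1 hx.2
      rw [inner_sub_right] at this
      linarith
    have := hεbound x hx.1
    rw [hxE] at this
    simp only [Metric.mem_closedBall, dist_zero_right]
    rw [le_div_iff₀ hε]
    linarith
  have hcompact : IsCompact (P ∩ E) :=
    Metric.isCompact_of_isClosed_isBounded (hclosedP.inter hclosedE) hbdd
  -- convexity
  have hlin : IsLinearMap ℝ (fun x : EuclideanSpace ℝ (Fin n) => (⟪u, x⟫ : ℝ)) :=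
    ⟨fun x y => inner_add_right u x y, fun c x => by
      rw [real_inner_smul_right]; rfl⟩
  have hconvP : Convex ℝ P := by
    rw [hP]
    have : {x : EuclideanSpace ℝ (Fin n) | ∀ i, 0 ≤ ⟪g i, x⟫}
        = ⋂ i, {x | 0 ≤ ⟪g i, x⟫} := by ext x; simp
    rw [this]
    exact convex_iInter fun i => convex_halfSpace_ge
      ⟨fun x y => inner_add_right (g i) x y, fun c x => by rw [real_inner_smul_right]; rfl⟩ 0
  have hconvE : Convex ℝ E := by
    have : E = {y : EuclideanSpace ℝ (Fin n) | ⟪u, y⟫ = ⟪u, x₀⟫} := by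
      rw [hE]; ext y
      simp only [Set.mem_setOf_eq, inner_sub_right, sub_eq_zero]
    rw [this]
    exact convex_hyperplane hlin _
  have hconv : Convex ℝ (P ∩ E) := hconvP.inter hconvE
  refine ⟨hcompact, hconv, ?_⟩
  -- dimension
  have hx₀mem : x₀ ∈ P ∩ E := ⟨hx₀P, (hmemE x₀).2 (by simp)⟩
  obtain ⟨δ, hδ, hballP⟩ := Metric.isOpen_iff.1 isOpen_interior x₀ hx₀
  have hball : Metric.ball x₀ δ ⊆ P := hballP.trans interior_subset
  -- vectorSpan = (ℝ ∙ u)ᗮ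
  have hVeq : vectorSpan ℝ (P ∩ E) = (Submodule.span ℝ {u})ᗮ := by
    apply le_antisymm
    · rw [vectorSpan_def]
      refine Submodule.span_le.2 ?_
      rintro w hw
      obtain ⟨y, hy, z, hz, rfl⟩ := Set.mem_vsub.1 hw
      refine Submodule.mem_orthogonal_singleton_iff_inner_right.2 ?_
      have hy' := (hmemE y).1 hy.2
      have hz' := (hmemE z).1 hz.2
      change ⟪u, y - z⟫ = 0
      rw [inner_sub_right] at hy' hz' ⊢
      linarith
    · intro v hv
      have hvu : ⟪u, v⟫ = 0 := Submodule.mem_orthogonal_singleton_iff_inner_right.1 hv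
      rcases eq_or_ne v 0 with rfl | hv0
      · exact Submodule.zero_mem _
      · have hnv : (0:ℝ) < ‖v‖ := norm_pos_iff.2 hv0
        set c : ℝ := δ / 2 / ‖v‖ with hc
        have hcpos : 0 < c := by positivity
        have hwball : x₀ + c • v ∈ Metric.ball x₀ δ := by
          simp only [Metric.mem_ball, dist_eq_norm, add_sub_cancel_left, norm_smul,
            Real.norm_eq_abs, abs_of_pos hcpos, hc]
          rw [abs_of_pos (by positivity : (0:ℝ) < δ / 2 / ‖v‖), div_mul_cancel₀ _ hnv.ne']
          linarith
        have hwmem : x₀ + c • v ∈ P ∩ E := by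
          refine ⟨hball hwball, (hmemE _).2 ?_⟩
          rw [add_sub_cancel_left, real_inner_smul_right, hvu, mul_zero]
        have hsub : (x₀ + c • v) -ᵥ x₀ ∈ vectorSpan ℝ (P ∩ E) :=
          vsub_mem_vectorSpan ℝ hwmem hx₀mem
        have hcv : c • v ∈ vectorSpan ℝ (P ∩ E) := by
          simpa using hsub
        have := Submodule.smul_mem (vectorSpan ℝ (P ∩ E)) c⁻¹ hcv
        rwa [smul_smul, inv_mul_cancel₀ hcpos.ne', one_smul] at this
  rw [hVeq]
  rcases Nat.eq_zero_or_pos n with hn | hn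
  · have h0 : Module.finrank ℝ (EuclideanSpace ℝ (Fin n)) = 0 := by
      rw [finrank_euclideanSpace_fin, hn]
    have hle := Submodule.finrank_le (Submodule.span ℝ {u})ᗮ
    rw [h0] at hle
    omega
  · -- u ≠ 0
    have hu0 : u ≠ 0 := by
      intro hu0
      have hvP : ∀ x ∈ P, x = 0 := fun x hx => hA x hx (by rw [hu0]; simp)
      set e : EuclideanSpace ℝ (Fin n) :=
        (δ / 2) • EuclideanSpace.single (⟨0, hn⟩ : Fin n) (1:ℝ) with he
      have hne : ‖e‖ = δ / 2 := by
        rw [he, norm_smul, EuclideanSpace.norm_single, norm_one, mul_one, Real.norm_eq_abs,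
          abs_of_pos (by linarith : (0:ℝ) < δ/2)]
      have he0 : e ≠ 0 := by
        intro h; rw [h, norm_zero] at hne; linarith
      have h1 : x₀ + e ∈ P := hball (by
        simp only [Metric.mem_ball, dist_eq_norm, add_sub_cancel_left, hne]; linarith)
      have h2 := hvP x₀ hx₀P
      have h3 := hvP _ h1
      rw [h2, zero_add] at h3
      exact he0 h3
    have h1 : Module.finrank ℝ (Submodule.span ℝ {u}) = 1 := finrank_span_singleton hu0
    have h2 := Submodule.finrank_add_finrank_orthogonal (𝕜 := ℝ) (Submodule.span ℝ {u})
    rw [finrank_euclideanSpace_fin, h1] at h2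
    omega
end

section
/- If the Finsler differential bound holds for a polytope P — i.e., there is C > 0 with ‖dΦ_x(v)‖₂ ≥ C‖v‖_x for all x ∈ int P and all v — then every rectifiable curve c in Φ(int P) has Euclidean length at least C times the Hilbert length of its preimage Φ⁻¹ ∘ c, and (int P, d) being complete implies Φ(int P) = ℝⁿ. -/
open RealInnerProductSpace

open Filter MeasureTheory Topology in
private lemma aux_interior_char {n m : ℕ} (g : Fin m → EuclideanSpace ℝ (Fin n)) (b : Fin m → ℝ)
    (P : Set (EuclideanSpace ℝ (Fin n)))
    (hP : P = {x | ∀ i, 0 ≤ ⟪g i, x⟫ + b i})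
    (hPint : (interior P).Nonempty) :
    interior P = {x | ∀ i, g i ≠ 0 → 0 < ⟪g i, x⟫ + b i} := by
  obtain ⟨x0, hx0⟩ := hPint
  have hx0P : x0 ∈ P := interior_subset hx0
  have hb : ∀ i, g i = 0 → 0 ≤ b i := by
    intro i h
    rw [hP] at hx0P
    have h2 := hx0P i
    simpa [h] using h2
  have hQP : {x : EuclideanSpace ℝ (Fin n) | ∀ i, g i ≠ 0 → 0 < ⟪g i, x⟫ + b i} ⊆ P := by
    intro x hx
    rw [hP]
    intro i
    by_cases h : g i = 0
    · simpa [h] using hb i h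
    · exact le_of_lt (hx i h)
  have hQopen : IsOpen {x : EuclideanSpace ℝ (Fin n) | ∀ i, g i ≠ 0 → 0 < ⟪g i, x⟫ + b i} := by
    have heq : {x : EuclideanSpace ℝ (Fin n) | ∀ i, g i ≠ 0 → 0 < ⟪g i, x⟫ + b i}
        = ⋂ i, {x | g i ≠ 0 → 0 < ⟪g i, x⟫ + b i} := by
      ext x; simp [Set.mem_iInter]
    rw [heq]
    refine isOpen_iInter_of_finite fun i => ?_
    by_cases h : g i = 0
    · simp [h]
    · have heq2 : {x : EuclideanSpace ℝ (Fin n) | g i ≠ 0 → 0 < ⟪g i, x⟫ + b i}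
          = {x | 0 < ⟪g i, x⟫ + b i} := by
        ext x; simp [h]
      rw [heq2]
      exact isOpen_lt continuous_const
        ((Continuous.inner continuous_const continuous_id).add continuous_const)
  refine Set.Subset.antisymm ?_ (interior_maximal hQP hQopen)
  intro x hx i hgi
  obtain ⟨ε, hε, hball⟩ := Metric.mem_nhds_iff.1 (mem_interior_iff_mem_nhds.1 hx)
  have hgn : (0:ℝ) < ‖g i‖ := norm_pos_iff.2 hgi
  set c : ℝ := ε / (2 * ‖g i‖) with hc
  have hcpos : 0 < c := by positivity
  have hcg : c * ‖g i‖ = ε / 2 := by rw [hc]; field_simp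
  have hy : x - c • g i ∈ P := by
    apply hball
    rw [Metric.mem_ball, dist_eq_norm]
    have h1 : x - c • g i - x = -(c • g i) := by abel
    rw [h1, norm_neg, norm_smul, Real.norm_of_nonneg hcpos.le, hcg]
    linarith
  rw [hP] at hy
  have h0 := hy i
  have h2 : ⟪g i, x - c • g i⟫ = ⟪g i, x⟫ - c * ‖g i‖ ^ 2 := by
    rw [inner_sub_right, real_inner_smul_right, real_inner_self_eq_norm_sq]
  rw [h2] at h0
  have h3 : (0:ℝ) < c * ‖g i‖ ^ 2 := by positivity
  linarith

private lemma aux_exists_frontier {n : ℕ} {P : Set (EuclideanSpace ℝ (Fin n))}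
    (hPcomp : IsCompact P) {x w : EuclideanSpace ℝ (Fin n)}
    (hx : x ∈ interior P) (hw : w ≠ 0) :
    ∃ t : ℝ, 0 < t ∧ x + t • w ∈ frontier P := by
  obtain ⟨R, hR, hRP⟩ := hPcomp.isBounded.subset_closedBall_lt 0 0
  have hPcl : IsClosed P := hPcomp.isClosed
  have hwn : (0:ℝ) < ‖w‖ := norm_pos_iff.2 hw
  set S : Set ℝ := {t | 0 ≤ t ∧ x + t • w ∈ P} with hS
  have hScl : IsClosed S := by
    have heq : S = Set.Ici 0 ∩ ((fun t : ℝ => x + t • w) ⁻¹' P) := by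
      ext t; simp [hS, Set.mem_Ici]
    rw [heq]
    exact isClosed_Ici.inter (hPcl.preimage (by continuity))
  have hSne : S.Nonempty := ⟨0, le_refl 0, by simpa using interior_subset hx⟩
  have hSbdd : BddAbove S := by
    refine ⟨(R + ‖x‖)/‖w‖, fun t ht => ?_⟩
    obtain ⟨ht0, htP⟩ := ht
    have h1 : ‖x + t • w‖ ≤ R := by simpa using hRP htP
    have h2 : t * ‖w‖ ≤ R + ‖x‖ := by
      have h3 : t * ‖w‖ = ‖(x + t • w) - x‖ := by
        rw [show (x + t • w) - x = t • w by abel, norm_smul, Real.norm_of_nonneg ht0]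
      have h4 : ‖(x + t • w) - x‖ ≤ ‖x + t • w‖ + ‖x‖ := norm_sub_le _ _
      linarith
    exact (le_div_iff₀ hwn).2 h2
  set T := sSup S with hT
  have hTS : T ∈ S := hScl.csSup_mem hSne hSbdd
  obtain ⟨ε, hε, hball⟩ := Metric.mem_nhds_iff.1 (mem_interior_iff_mem_nhds.1 hx)
  set t0 : ℝ := ε / (2 * ‖w‖) with ht0
  have ht0pos : 0 < t0 := by positivity
  have ht0S : t0 ∈ S := by
    refine ⟨ht0pos.le, hball ?_⟩
    rw [Metric.mem_ball, dist_eq_norm]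
    rw [show x + t0 • w - x = t0 • w by abel, norm_smul, Real.norm_of_nonneg ht0pos.le]
    have h5 : t0 * ‖w‖ = ε / 2 := by rw [ht0]; field_simp
    rw [h5]; linarith
  have hTpos : 0 < T := lt_of_lt_of_le ht0pos (le_csSup hSbdd ht0S)
  refine ⟨T, hTpos, ?_⟩
  rw [hPcl.frontier_eq]
  refine ⟨hTS.2, fun hInt => ?_⟩
  obtain ⟨δ, hδ, hball2⟩ := Metric.mem_nhds_iff.1 (mem_interior_iff_mem_nhds.1 hInt)
  set t1 : ℝ := T + δ / (2 * ‖w‖) with ht1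
  have hδw : 0 < δ / (2 * ‖w‖) := by positivity
  have ht1S : t1 ∈ S := by
    refine ⟨by rw [ht1]; positivity, hball2 ?_⟩
    rw [Metric.mem_ball, dist_eq_norm]
    rw [show x + t1 • w - (x + T • w) = (δ / (2 * ‖w‖)) • w by
      rw [ht1, add_smul]; abel, norm_smul, Real.norm_of_nonneg hδw.le]
    have h6 : δ / (2 * ‖w‖) * ‖w‖ = δ / 2 := by field_simp
    rw [h6]; linarith
  have := le_csSup hSbdd ht1S
  rw [ht1] at this
  linarith

private lemma aux_span {n m : ℕ} (g : Fin m → EuclideanSpace ℝ (Fin n)) (b : Fin m → ℝ)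
    (P : Set (EuclideanSpace ℝ (Fin n)))
    (hP : P = {x | ∀ i, 0 ≤ ⟪g i, x⟫ + b i})
    (hPcomp : IsCompact P) (hPne : P.Nonempty)
    {v : EuclideanSpace ℝ (Fin n)} (hv : ∀ i, ⟪g i, v⟫ = 0) : v = 0 := by
  by_contra hv0
  obtain ⟨x0, hx0⟩ := hPne
  obtain ⟨R, hR, hRP⟩ := hPcomp.isBounded.subset_closedBall_lt 0 0
  have hvn : (0:ℝ) < ‖v‖ := norm_pos_iff.2 hv0
  have hmem : ∀ t : ℝ, x0 + t • v ∈ P := by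
    intro t
    rw [hP]
    intro i
    rw [hP] at hx0
    have := hx0 i
    have h1 : ⟪g i, x0 + t • v⟫ = ⟪g i, x0⟫ := by
      rw [inner_add_right, real_inner_smul_right, hv i, mul_zero, add_zero]
    rw [h1]
    exact this
  set t : ℝ := (R + ‖x0‖ + 1) / ‖v‖ with htdef
  have h1 : ‖x0 + t • v‖ ≤ R := by simpa using hRP (hmem t)
  have htpos : 0 < t := by positivity
  have h2 : t * ‖v‖ ≤ ‖x0 + t • v‖ + ‖x0‖ := by
    have h3 : t * ‖v‖ = ‖(x0 + t • v) - x0‖ := by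
      rw [show (x0 + t • v) - x0 = t • v by abel, norm_smul, Real.norm_of_nonneg htpos.le]
    have h4 : ‖(x0 + t • v) - x0‖ ≤ ‖x0 + t • v‖ + ‖x0‖ := norm_sub_le _ _
    linarith
  have h5 : t * ‖v‖ = R + ‖x0‖ + 1 := by rw [htdef]; field_simp
  have h6 : 0 ≤ ‖x0‖ := norm_nonneg _
  linarith

private lemma aux_deriv {n m : ℕ} (g : Fin m → EuclideanSpace ℝ (Fin n)) (b : Fin m → ℝ)
    {x : EuclideanSpace ℝ (Fin n)}
    (hpos : ∀ i, g i ≠ 0 → 0 < ⟪g i, x⟫ + b i) :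
    HasStrictFDerivAt (fun z => ∑ i, Real.log (⟪g i, z⟫ + b i) • g i)
      (∑ i, (⟪g i, x⟫ + b i)⁻¹ • (((innerSL ℝ) (g i)).smulRight (g i))) x := by
  apply HasStrictFDerivAt.fun_sum
  intro i _
  by_cases h : g i = 0
  · have h1 : (fun z : EuclideanSpace ℝ (Fin n) => Real.log (⟪g i, z⟫ + b i) • g i)
        = fun _ => (0 : EuclideanSpace ℝ (Fin n)) := by
      funext z; simp [h]
    have h2 : (⟪g i, x⟫ + b i)⁻¹ • (((innerSL ℝ) (g i)).smulRight (g i)) = 0 := by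
      ext v; simp [h]
    rw [h1, h2]
    exact hasStrictFDerivAt_const 0 x
  · have hf : (0:ℝ) < ⟪g i, x⟫ + b i := hpos i h
    have h1 : HasStrictFDerivAt (fun z : EuclideanSpace ℝ (Fin n) => ⟪g i, z⟫ + b i)
        ((innerSL ℝ) (g i)) x :=
      (((innerSL ℝ) (g i)).hasStrictFDerivAt).add_const (b i)
    have h2 := (Real.hasStrictDerivAt_log (ne_of_gt hf)).comp_hasStrictFDerivAt x h1
    have h3 := h2.smul (hasStrictFDerivAt_const (g i) x)
    convert h3 using 1
    · ext v
      simp [ContinuousLinearMap.smulRight_apply, smul_smul]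
    · ext v
      simp [ContinuousLinearMap.smulRight_apply, smul_smul]

/-- If the Finsler differential bound (A) holds for a polytope `P`, then the Euclidean length
of any (differentiable) curve in `Φ(int P)` is at least `C` times the Hilbert length of its
preimage, and by completeness of `(int P, d)` the image `Φ(int P)` is all of `ℝⁿ`. -/
theorem curve_length_bound_and_surjective {n m : ℕ}
    (g : Fin m → EuclideanSpace ℝ (Fin n)) (b : Fin m → ℝ)
    (P : Set (EuclideanSpace ℝ (Fin n)))
    (hP : P = {x | ∀ i, 0 ≤ ⟪g i, x⟫ + b i})
    (hPcomp : IsCompact P) (hPint : (interior P).Nonempty)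
    -- the Hilbert Finsler norm
    (N : EuclideanSpace ℝ (Fin n) → EuclideanSpace ℝ (Fin n) → ℝ)
    (hN0 : ∀ x, N x 0 = 0)
    (hN : ∀ x ∈ interior P, ∀ w : EuclideanSpace ℝ (Fin n), w ≠ 0 →
      ∀ t1 t2 : ℝ, 0 < t1 → 0 < t2 →
        x + t1 • w ∈ frontier P → x - t2 • w ∈ frontier P →
        N x w = (1/2) * (1/t1 + 1/t2))
    -- the Hilbert metric and its completeness
    (d : EuclideanSpace ℝ (Fin n) → EuclideanSpace ℝ (Fin n) → ℝ)
    (hd0 : ∀ x, d x x = 0)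
    (hd : ∀ x y, x ∈ interior P → y ∈ interior P → x ≠ y →
      ∀ a1 a2 : EuclideanSpace ℝ (Fin n), a1 ∈ frontier P → a2 ∈ frontier P →
      (∃ t1 t2 : ℝ, t1 < 0 ∧ 1 < t2 ∧ a1 = x + t1 • (y - x) ∧ a2 = x + t2 • (y - x)) →
      d x y = (1/2) * Real.log ((‖y - a1‖ / ‖x - a1‖) * (‖x - a2‖ / ‖y - a2‖)))
    (hcomplete : ∀ u : ℕ → EuclideanSpace ℝ (Fin n), (∀ k, u k ∈ interior P) →
      (∀ ε > 0, ∃ K : ℕ, ∀ p ≥ K, ∀ q ≥ K, d (u p) (u q) < ε) →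
      ∃ x ∈ interior P, ∀ ε > 0, ∃ K : ℕ, ∀ k ≥ K, d (u k) x < ε)
    (Φ : EuclideanSpace ℝ (Fin n) → EuclideanSpace ℝ (Fin n))
    (hΦ : ∀ x, Φ x = ∑ i, Real.log (⟪g i, x⟫ + b i) • g i)
    -- property (A): the Finsler differential bound
    (C : ℝ) (hC : 0 < C)
    (hA : ∀ x ∈ interior P, ∀ v : EuclideanSpace ℝ (Fin n),
      C * N x v ≤ ‖∑ i, ((⟪g i, v⟫ / (⟪g i, x⟫ + b i)) • g i)‖) :
    (∀ γ γ' : ℝ → EuclideanSpace ℝ (Fin n),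
      (∀ t ∈ Set.Icc (0:ℝ) 1, γ t ∈ interior P) →
      (∀ t ∈ Set.Icc (0:ℝ) 1, HasDerivAt γ (γ' t) t) →
      C * ∫ t in (0:ℝ)..1, N (γ t) (γ' t) ≤
        ∫ t in (0:ℝ)..1, ‖∑ i, ((⟪g i, γ' t⟫ / (⟪g i, γ t⟫ + b i)) • g i)‖) ∧
    Φ '' interior P = Set.univ := by
  classical
  obtain ⟨x0, hx0⟩ := hPint
  obtain ⟨R, hR, hRP⟩ := hPcomp.isBounded.subset_closedBall_lt 0 0
  have hIntChar := aux_interior_char g b P hP ⟨x0, hx0⟩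
  have hΦfun : Φ = fun z => ∑ i, Real.log (⟪g i, z⟫ + b i) • g i := funext hΦ
  have hpos : ∀ x ∈ interior P, ∀ i, g i ≠ 0 → 0 < ⟪g i, x⟫ + b i := by
    intro x hx
    rw [hIntChar] at hx
    exact hx
  -- derivative of Φ at interior points
  have hderiv : ∀ x ∈ interior P, HasStrictFDerivAt Φ
      (∑ i, (⟪g i, x⟫ + b i)⁻¹ • (((innerSL ℝ) (g i)).smulRight (g i))) x := by
    intro x hx
    rw [hΦfun]
    exact aux_deriv g b (hpos x hx)
  -- N lower bound
  have hNlow : ∀ x ∈ interior P, ∀ w : EuclideanSpace ℝ (Fin n),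
      ‖w‖ ≤ (2 * R) * N x w := by
    intro x hx w
    by_cases hw : w = 0
    · simp [hw, hN0]
    · obtain ⟨t1, ht1, hfr1⟩ := aux_exists_frontier hPcomp hx hw
      obtain ⟨t2, ht2, hfr2⟩ := aux_exists_frontier hPcomp hx (neg_ne_zero.2 hw)
      have hfr2' : x - t2 • w ∈ frontier P := by
        have : x + t2 • (-w) = x - t2 • w := by rw [smul_neg]; abel
        rwa [this] at hfr2
      have hNeq := hN x hx w hw t1 t2 ht1 ht2 hfr1 hfr2'
      have hwn : (0:ℝ) < ‖w‖ := norm_pos_iff.2 hw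
      have hxP : x ∈ P := interior_subset hx
      have hfrP : frontier P ⊆ P := hPcomp.isClosed.frontier_subset
      have hb1 : ‖x + t1 • w‖ ≤ R := by simpa using hRP (hfrP hfr1)
      have hb2 : ‖x - t2 • w‖ ≤ R := by simpa using hRP (hfrP hfr2')
      have hbx : ‖x‖ ≤ R := by simpa using hRP hxP
      have e1 : t1 * ‖w‖ ≤ 2 * R := by
        have h3 : t1 * ‖w‖ = ‖(x + t1 • w) - x‖ := by
          rw [show (x + t1 • w) - x = t1 • w by abel, norm_smul,
            Real.norm_of_nonneg ht1.le]
        have h4 : ‖(x + t1 • w) - x‖ ≤ ‖x + t1 • w‖ + ‖x‖ := norm_sub_le _ _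
        linarith
      have e2 : t2 * ‖w‖ ≤ 2 * R := by
        have h3 : t2 * ‖w‖ = ‖(x - t2 • w) - x‖ := by
          rw [show (x - t2 • w) - x = -(t2 • w) by abel, norm_neg, norm_smul,
            Real.norm_of_nonneg ht2.le]
        have h4 : ‖(x - t2 • w) - x‖ ≤ ‖x - t2 • w‖ + ‖x‖ := norm_sub_le _ _
        linarith
      have f1 : ‖w‖ / (2 * R) ≤ 1 / t1 := by
        rw [div_le_div_iff₀ (by positivity) ht1]
        linarith
      have f2 : ‖w‖ / (2 * R) ≤ 1 / t2 := by
        rw [div_le_div_iff₀ (by positivity) ht2]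
        linarith
      have f3 : ‖w‖ / (2 * R) ≤ N x w := by rw [hNeq]; linarith
      have := (div_le_iff₀ (by positivity : (0:ℝ) < 2 * R)).1 f3
      linarith
  constructor
  · -- curve length bound
    intro γ γ' hγP hγd
    by_cases hInt : IntervalIntegrable (fun t => N (γ t) (γ' t)) MeasureTheory.volume 0 1
    · have hγc : ContinuousOn γ (Set.Icc 0 1) :=
        fun t ht => ((hγd t ht).continuousAt).continuousWithinAt
      -- uniform positive lower bound for the affine functionals along γ
      have hδ : ∀ i : Fin m, ∃ δ : ℝ, 0 < δ ∧
          ∀ t ∈ Set.Icc (0:ℝ) 1, g i ≠ 0 → δ ≤ ⟪g i, γ t⟫ + b i := by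
        intro i
        by_cases h : g i = 0
        · exact ⟨1, one_pos, fun t ht h' => absurd h h'⟩
        · have hcont : ContinuousOn (fun t => ⟪g i, γ t⟫ + b i) (Set.Icc (0:ℝ) 1) :=
            (((Continuous.inner continuous_const continuous_id).add
              continuous_const).comp_continuousOn hγc)
          obtain ⟨t0, ht0, hmin⟩ := isCompact_Icc.exists_isMinOn
            ⟨0, by norm_num, by norm_num⟩ hcont
          exact ⟨⟪g i, γ t0⟫ + b i, hpos (γ t0) (hγP t0 ht0) i h,
            fun t ht _ => hmin ht⟩
      choose δ hδpos hδle using hδ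
      set K : ℝ := ∑ i, ‖g i‖ ^ 2 / δ i with hK
      have hKnn : 0 ≤ K := Finset.sum_nonneg fun i _ => div_nonneg (sq_nonneg _) (hδpos i).le
      have hptbound : ∀ t ∈ Set.Icc (0:ℝ) 1,
          ‖∑ i, ((⟪g i, γ' t⟫ / (⟪g i, γ t⟫ + b i)) • g i)‖
            ≤ (K * (2 * R)) * N (γ t) (γ' t) := by
        intro t ht
        have hterm : ∀ i : Fin m,
            ‖(⟪g i, γ' t⟫ / (⟪g i, γ t⟫ + b i)) • g i‖ ≤ (‖g i‖ ^ 2 / δ i) * ‖γ' t‖ := by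
          intro i
          by_cases h : g i = 0
          · simp only [h, smul_zero, norm_zero]
            exact mul_nonneg (div_nonneg (sq_nonneg _) (hδpos i).le) (norm_nonneg _)
          · rw [norm_smul, Real.norm_eq_abs, abs_div]
            have h1 : |⟪g i, γ' t⟫| ≤ ‖g i‖ * ‖γ' t‖ := abs_real_inner_le_norm _ _
            have h2 : δ i ≤ ⟪g i, γ t⟫ + b i := hδle i t ht h
            have h3 : 0 < δ i := hδpos i
            have h4 : |⟪g i, γ t⟫ + b i| = ⟪g i, γ t⟫ + b i := abs_of_pos (lt_of_lt_of_le h3 h2)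
            rw [h4]
            have h5 : |⟪g i, γ' t⟫| / (⟪g i, γ t⟫ + b i) ≤ (‖g i‖ * ‖γ' t‖) / δ i := by
              apply div_le_div₀ (by positivity) h1 h3 h2
            calc |⟪g i, γ' t⟫| / (⟪g i, γ t⟫ + b i) * ‖g i‖
                ≤ (‖g i‖ * ‖γ' t‖) / δ i * ‖g i‖ := by
                  exact mul_le_mul_of_nonneg_right h5 (norm_nonneg _)
              _ = (‖g i‖ ^ 2 / δ i) * ‖γ' t‖ := by ring
        calc ‖∑ i, ((⟪g i, γ' t⟫ / (⟪g i, γ t⟫ + b i)) • g i)‖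
            ≤ ∑ i, ‖(⟪g i, γ' t⟫ / (⟪g i, γ t⟫ + b i)) • g i‖ := norm_sum_le _ _
          _ ≤ ∑ i, (‖g i‖ ^ 2 / δ i) * ‖γ' t‖ := Finset.sum_le_sum fun i _ => hterm i
          _ = K * ‖γ' t‖ := by rw [hK, Finset.sum_mul]
          _ ≤ K * ((2 * R) * N (γ t) (γ' t)) :=
              mul_le_mul_of_nonneg_left (hNlow (γ t) (hγP t ht) (γ' t)) hKnn
          _ = (K * (2 * R)) * N (γ t) (γ' t) := by ring
      -- measurability of the integrand
      have hγm : AEMeasurable γ (MeasureTheory.volume.restrict (Set.Ioc (0:ℝ) 1)) :=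
        (hγc.mono Set.Ioc_subset_Icc_self).aemeasurable measurableSet_Ioc
      have haeq : γ' =ᵐ[MeasureTheory.volume.restrict (Set.Ioc (0:ℝ) 1)] deriv γ := by
        rw [Filter.EventuallyEq, MeasureTheory.ae_restrict_iff' measurableSet_Ioc]
        exact MeasureTheory.ae_of_all _
          fun t ht => ((hγd t (Set.Ioc_subset_Icc_self ht)).deriv).symm
      have hγ'm : AEMeasurable γ' (MeasureTheory.volume.restrict (Set.Ioc (0:ℝ) 1)) :=
        ((measurable_deriv γ).aemeasurable).congr haeq.symm
      have hqm : AEMeasurable (fun t => ∑ i, ((⟪g i, γ' t⟫ / (⟪g i, γ t⟫ + b i)) • g i))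
          (MeasureTheory.volume.restrict (Set.Ioc (0:ℝ) 1)) := by
        apply Finset.aemeasurable_fun_sum
        intro i _
        have h1 : AEMeasurable (fun t => ⟪g i, γ' t⟫)
            (MeasureTheory.volume.restrict (Set.Ioc (0:ℝ) 1)) :=
          (Continuous.inner (continuous_const :
              Continuous fun _ : EuclideanSpace ℝ (Fin n) => g i)
            continuous_id).measurable.comp_aemeasurable hγ'm
        have h2 : AEMeasurable (fun t => ⟪g i, γ t⟫ + b i)
            (MeasureTheory.volume.restrict (Set.Ioc (0:ℝ) 1)) :=
          ((Continuous.inner (continuous_const :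
              Continuous fun _ : EuclideanSpace ℝ (Fin n) => g i)
            continuous_id).add continuous_const).measurable.comp_aemeasurable hγm
        exact (h1.div h2).smul aemeasurable_const
      have hII2 : IntervalIntegrable
          (fun t => ‖∑ i, ((⟪g i, γ' t⟫ / (⟪g i, γ t⟫ + b i)) • g i)‖)
          MeasureTheory.volume 0 1 := by
        rw [intervalIntegrable_iff_integrableOn_Ioc_of_le (by norm_num)]
        have hdom : MeasureTheory.Integrable (fun t => (K * (2 * R)) * N (γ t) (γ' t))
            (MeasureTheory.volume.restrict (Set.Ioc (0:ℝ) 1)) := by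
          have := hInt.const_mul (K * (2 * R))
          rwa [intervalIntegrable_iff_integrableOn_Ioc_of_le (by norm_num)] at this
        refine hdom.mono' (continuous_norm.measurable.comp_aemeasurable hqm).aestronglyMeasurable ?_
        rw [MeasureTheory.ae_restrict_iff' measurableSet_Ioc]
        refine MeasureTheory.ae_of_all _ fun t ht => ?_
        rw [norm_norm]
        exact hptbound t (Set.Ioc_subset_Icc_self ht)
      rw [← intervalIntegral.integral_const_mul]
      exact intervalIntegral.integral_mono_on (by norm_num) (hInt.const_mul C) hII2
        (fun t ht => hA (γ t) (hγP t ht) (γ' t))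
    · rw [intervalIntegral.integral_undef hInt, mul_zero]
      exact intervalIntegral.integral_nonneg (by norm_num) fun u hu => norm_nonneg _
  · -- surjectivity
    have hPne : P.Nonempty := ⟨x0, interior_subset hx0⟩
    -- injectivity of the differential
    have hker : ∀ x ∈ interior P, ∀ v : EuclideanSpace ℝ (Fin n),
        (∑ i, (⟪g i, x⟫ + b i)⁻¹ • (((innerSL ℝ) (g i)).smulRight (g i))) v = 0 → v = 0 := by
      intro x hx v hv
      have hinner : ⟪(∑ i, (⟪g i, x⟫ + b i)⁻¹ •
            (((innerSL ℝ) (g i)).smulRight (g i))) v, v⟫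
          = ∑ i, (⟪g i, x⟫ + b i)⁻¹ * (⟪g i, v⟫ * ⟪g i, v⟫) := by
        rw [ContinuousLinearMap.sum_apply, sum_inner]
        refine Finset.sum_congr rfl fun i _ => ?_
        rw [ContinuousLinearMap.smul_apply, ContinuousLinearMap.smulRight_apply]
        rw [real_inner_smul_left, real_inner_smul_left]
        have : ((innerSL ℝ) (g i)) v = ⟪g i, v⟫ := rfl
        rw [this]
      rw [hv, inner_zero_left] at hinner
      have hterm : ∀ i ∈ Finset.univ, (0:ℝ) ≤ (⟪g i, x⟫ + b i)⁻¹ * (⟪g i, v⟫ * ⟪g i, v⟫) := by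
        intro i _
        by_cases h : g i = 0
        · simp [h]
        · exact mul_nonneg (inv_nonneg.2 (hpos x hx i h).le) (mul_self_nonneg _)
      have hz := (Finset.sum_eq_zero_iff_of_nonneg hterm).1 hinner.symm
      apply aux_span g b P hP hPcomp hPne
      intro i
      by_cases h : g i = 0
      · simp [h]
      · have h1 := hz i (Finset.mem_univ i)
        have h2 : ((⟪g i, x⟫ + b i)⁻¹ : ℝ) ≠ 0 := inv_ne_zero (ne_of_gt (hpos x hx i h))
        rcases mul_eq_zero.1 h1 with h3 | h3
        · exact absurd h3 h2
        · exact mul_self_eq_zero.1 h3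
    -- Φ is open on the interior
    have hopen : IsOpen (Φ '' interior P) := by
      rw [isOpen_iff_mem_nhds]
      rintro y ⟨x, hx, rfl⟩
      set L := ∑ i, (⟪g i, x⟫ + b i)⁻¹ • (((innerSL ℝ) (g i)).smulRight (g i)) with hL
      have hder := hderiv x hx
      rw [← hL] at hder
      have hinjL : Function.Injective L := by
        intro v w hvw
        have : L (v - w) = 0 := by rw [map_sub, hvw, sub_self]
        have := hker x hx (v - w) this
        exact sub_eq_zero.1 this
      have hbij : Function.Bijective L :=
        ⟨hinjL, (LinearMap.injective_iff_surjective
          (f := (L : EuclideanSpace ℝ (Fin n) →ₗ[ℝ] EuclideanSpace ℝ (Fin n)))).1 hinjL⟩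
      set e : EuclideanSpace ℝ (Fin n) ≃L[ℝ] EuclideanSpace ℝ (Fin n) :=
        (LinearEquiv.ofBijective (L : EuclideanSpace ℝ (Fin n) →ₗ[ℝ] EuclideanSpace ℝ (Fin n))
          hbij).toContinuousLinearEquiv with he
      have hecoe : (e : EuclideanSpace ℝ (Fin n) →L[ℝ] EuclideanSpace ℝ (Fin n)) = L := by
        ext v; rfl
      rw [← hecoe] at hder
      have hmap := hder.map_nhds_eq_of_equiv
      rw [← hmap]
      exact Filter.image_mem_map (isOpen_interior.mem_nhds hx)
    -- Φ has closed image
    have hclosed : IsClosed (Φ '' interior P) := by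
      apply IsSeqClosed.isClosed
      intro u y hu hy
      choose z hz hzΦ using hu
      obtain ⟨x, hxP, φ, hφmono, hφtend⟩ := hPcomp.isSeqCompact fun k => interior_subset (hz k)
      set w : ℕ → EuclideanSpace ℝ (Fin n) := fun k => z (φ k) with hw
      have hwint : ∀ k, w k ∈ interior P := fun k => hz (φ k)
      have hΦw : Filter.Tendsto (fun k => Φ (w k)) Filter.atTop (nhds y) := by
        have : (fun k => Φ (w k)) = u ∘ φ := funext fun k => hzΦ (φ k)
        rw [this]
        exact hy.comp hφmono.tendsto_atTop
      by_cases hxint : x ∈ interior P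
      · have hc : ContinuousAt Φ x := (hderiv x hxint).continuousAt
        have h1 : Filter.Tendsto (fun k => Φ (w k)) Filter.atTop (nhds (Φ x)) :=
          (hc.tendsto).comp hφtend
        exact ⟨x, hxint, tendsto_nhds_unique h1 hΦw⟩
      · exfalso
        have hxQ : ¬ ∀ i, g i ≠ 0 → 0 < ⟪g i, x⟫ + b i := by
          rw [← Set.mem_setOf_eq (p := fun x => ∀ i, g i ≠ 0 → 0 < ⟪g i, x⟫ + b i),
            ← hIntChar] at *
          exact hxint
        push_neg at hxQ
        obtain ⟨j, hgj, hfj⟩ := hxQ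
        have hfj0 : ⟪g j, x⟫ + b j = 0 := by
          rw [hP] at hxP
          exact le_antisymm hfj (hxP j)
        set u0 : EuclideanSpace ℝ (Fin n) := x0 - x with hu0
        -- inner products with u0
        have hinnerΦ : ∀ zz : EuclideanSpace ℝ (Fin n),
            ⟪u0, Φ zz⟫ = ∑ i, Real.log (⟪g i, zz⟫ + b i) * ⟪u0, g i⟫ := by
          intro zz
          rw [hΦ zz, inner_sum]
          exact Finset.sum_congr rfl fun i _ => real_inner_smul_right _ _ _
        have hupos : ∀ i, g i ≠ 0 → ⟪g i, x⟫ + b i = 0 → 0 < ⟪u0, g i⟫ := by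
          intro i hgi hfi
          have h1 : 0 < ⟪g i, x0⟫ + b i := hpos x0 hx0 i hgi
          have h2 : ⟪u0, g i⟫ = ⟪g i, x0⟫ - ⟪g i, x⟫ := by
            rw [hu0, real_inner_comm, inner_sub_right]
          rw [h2]
          linarith
        -- limits of the affine functionals along w
        have hflim : ∀ i : Fin m, Filter.Tendsto (fun k => ⟪g i, w k⟫ + b i)
            Filter.atTop (nhds (⟪g i, x⟫ + b i)) := by
          intro i
          exact (((Continuous.inner (continuous_const :
              Continuous fun _ : EuclideanSpace ℝ (Fin n) => g i)
            continuous_id).add continuous_const).tendsto x).comp hφtend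
        -- eventual upper bounds for each term
        have hbound : ∀ i : Fin m, ∃ B : ℝ, ∀ᶠ k in Filter.atTop,
            Real.log (⟪g i, w k⟫ + b i) * ⟪u0, g i⟫ ≤ B := by
          intro i
          by_cases hgi : g i = 0
          · refine ⟨0, Filter.Eventually.of_forall fun k => ?_⟩
            simp [hgi]
          · by_cases hfi : ⟪g i, x⟫ + b i = 0
            · -- term tends to -∞
              have hlog : Filter.Tendsto (fun k => Real.log (⟪g i, w k⟫ + b i))
                  Filter.atTop Filter.atBot := by
                apply Real.tendsto_log_nhdsGT_zero.comp
                rw [tendsto_nhdsWithin_iff]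
                constructor
                · have := hflim i
                  rwa [hfi] at this
                · exact Filter.Eventually.of_forall fun k =>
                    Set.mem_Ioi.2 (hpos (w k) (hwint k) i hgi)
              have := hlog.atBot_mul_const (hupos i hgi hfi)
              exact ⟨0, this.eventually (Filter.eventually_le_atBot 0)⟩
            · -- term converges
              have hlog : Filter.Tendsto (fun k => Real.log (⟪g i, w k⟫ + b i))
                  Filter.atTop (nhds (Real.log (⟪g i, x⟫ + b i))) :=
                ((Real.continuousAt_log hfi).tendsto).comp (hflim i)
              have hterm : Filter.Tendsto
                  (fun k => Real.log (⟪g i, w k⟫ + b i) * ⟪u0, g i⟫)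
                  Filter.atTop (nhds (Real.log (⟪g i, x⟫ + b i) * ⟪u0, g i⟫)) :=
                hlog.mul_const _
              exact ⟨Real.log (⟪g i, x⟫ + b i) * ⟪u0, g i⟫ + 1,
                (hterm.eventually_lt_const (lt_add_one _)).mono fun k hk => hk.le⟩
        choose B hB using hbound
        -- the j-th term tends to -∞
        have hlogj : Filter.Tendsto (fun k => Real.log (⟪g j, w k⟫ + b j))
            Filter.atTop Filter.atBot := by
          apply Real.tendsto_log_nhdsGT_zero.comp
          rw [tendsto_nhdsWithin_iff]
          constructor
          · have := hflim j
            rwa [hfj0] at this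
          · exact Filter.Eventually.of_forall fun k =>
              Set.mem_Ioi.2 (hpos (w k) (hwint k) j hgj)
        have htermj : Filter.Tendsto (fun k => Real.log (⟪g j, w k⟫ + b j) * ⟪u0, g j⟫)
            Filter.atTop Filter.atBot :=
          hlogj.atBot_mul_const (hupos j hgj hfj0)
        -- total inner product tends to -∞
        have htotal : Filter.Tendsto (fun k => ⟪u0, Φ (w k)⟫) Filter.atTop Filter.atBot := by
          have hgsum : Filter.Tendsto
              (fun k => Real.log (⟪g j, w k⟫ + b j) * ⟪u0, g j⟫
                + ∑ i ∈ Finset.univ.erase j, B i) Filter.atTop Filter.atBot :=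
            Filter.tendsto_atBot_add_const_right _ _ htermj
          apply Filter.tendsto_atBot_mono' _ _ hgsum
          have hev : ∀ᶠ k in Filter.atTop, ∀ i ∈ Finset.univ.erase j,
              Real.log (⟪g i, w k⟫ + b i) * ⟪u0, g i⟫ ≤ B i :=
            (Finset.eventually_all _).2 fun i _ => hB i
          refine hev.mono fun k hk => ?_
          dsimp only
          rw [hinnerΦ (w k), ← Finset.add_sum_erase _ _ (Finset.mem_univ j)]
          exact add_le_add le_rfl (Finset.sum_le_sum hk)
        have hconv : Filter.Tendsto (fun k => ⟪u0, Φ (w k)⟫) Filter.atTop (nhds ⟪u0, y⟫) :=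
          Filter.Tendsto.inner tendsto_const_nhds hΦw
        exact not_tendsto_atBot_of_tendsto_nhds hconv htotal
    exact (IsClopen.eq_univ ⟨hclosed, hopen⟩) ⟨Φ x0, ⟨x0, hx0, rfl⟩⟩
end
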